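/- Let (X, Γ, Φ) be a minimal equicontinuous Cantor action, x ∈ X a basepoint, and { U_ℓ : ℓ ≥ 0 } an adapted neighborhood basis at x with stabilizer subgroups Γ_ℓ = { g ∈ Γ : Φ(g)(U_ℓ) = U_ℓ }. Let C_ℓ = ⋂_{g ∈ Γ} g Γ_ℓ g⁻¹ be the normal core of Γ_ℓ in Γ, let D_∞ be the inverse limit of the finite groups Γ_ℓ/C_ℓ with bonding maps induced by the inclusions Γ_{ℓ+1} ⊂ Γ_ℓ, and let k*_ℓ be the cardinality of the image of the projection D_∞ → Γ_ℓ/C_ℓ. Then: (1) Π[G(Φ)] = LCM{ [Γ : C_ℓ] : ℓ ≥ 0 }; (2) Π[G(Φ) : D(Φ,x)] = LCM{ [Γ : Γ_ℓ] : ℓ ≥ 0 }; (3) Π[D(Φ,x)] = LCM{ k*_ℓ : ℓ ≥ 0 }. -/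

import Mathlib

noncomputable section

open Set Topology

/-! ### The group of homeomorphisms -/

namespace Homeomorph

variable {X : Type*} [TopologicalSpace X]

instance instGroup' : Group (X ≃ₜ X) where
  mul f g := g.trans f
  one := Homeomorph.refl X
  inv := Homeomorph.symm
  mul_assoc f g h := rfl
  one_mul f := rfl
  mul_one f := rfl
  inv_mul_cancel f := Homeomorph.ext fun x => f.symm_apply_apply x

@[simp] theorem mul_apply' (f g : X ≃ₜ X) (x : X) : (f * g) x = f (g x) := rfl
@[simp] theorem one_apply' (x : X) : (1 : X ≃ₜ X) x = x := rfl
@[simp] theorem inv_eq_symm (f : X ≃ₜ X) : f⁻¹ = f.symm := rfl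

/-- The uniform topology (topology of uniform convergence, equivalently for a compact
metric space the compact-open topology) on the group of homeomorphisms of a compact
metric space, as the metric topology of the sup-metric. -/
instance instMetricSpaceHomeomorph {Y : Type*} [MetricSpace Y] [CompactSpace Y] :
    MetricSpace (Y ≃ₜ Y) :=
  MetricSpace.induced (fun h => (⟨h, h.continuous⟩ : C(Y, Y)))
    (fun f g hfg => Homeomorph.ext fun x => congrFun (congrArg ContinuousMap.toFun hfg) x)
    inferInstance

end Homeomorph

namespace Homeomorph

variable {Y : Type*} [MetricSpace Y] [CompactSpace Y]

theorem dist_eq_contMap (f g : Y ≃ₜ Y) :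
    dist f g = dist (⟨f, f.continuous⟩ : C(Y, Y)) (⟨g, g.continuous⟩ : C(Y, Y)) := rfl

theorem dist_apply_le (f g : Y ≃ₜ Y) (x : Y) : dist (f x) (g x) ≤ dist f g :=
  ContinuousMap.dist_apply_le_dist (f := (⟨f, f.continuous⟩ : C(Y, Y)))
    (g := (⟨g, g.continuous⟩ : C(Y, Y))) x

theorem dist_lt_iff' (f g : Y ≃ₜ Y) {C : ℝ} (hC : 0 < C) :
    dist f g < C ↔ ∀ x : Y, dist (f x) (g x) < C := by
  rw [dist_eq_contMap, ContinuousMap.dist_lt_iff hC]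
  rfl

instance : IsTopologicalGroup (Y ≃ₜ Y) where
  continuous_mul := by
    rw [Metric.continuous_iff]
    rintro ⟨f₀, g₀⟩ ε hε
    obtain ⟨δ₁, hδ₁, H₁⟩ := Metric.uniformContinuous_iff.mp
      (CompactSpace.uniformContinuous_of_continuous f₀.continuous) (ε / 2) (by positivity)
    refine ⟨min δ₁ (ε / 2), by positivity, ?_⟩
    rintro ⟨f, g⟩ hd
    have hdf : dist f f₀ < ε / 2 := by
      have h' : dist f f₀ ≤ dist ((f, g)) ((f₀, g₀)) := by
        rw [Prod.dist_eq]; exact le_max_left _ _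
      exact (h'.trans_lt hd).trans_le (min_le_right _ _)
    have hdg : dist g g₀ < δ₁ := by
      have h' : dist g g₀ ≤ dist ((f, g)) ((f₀, g₀)) := by
        rw [Prod.dist_eq]; exact le_max_right _ _
      exact (h'.trans_lt hd).trans_le (min_le_left _ _)
    rw [dist_lt_iff' _ _ hε]
    intro x
    have h1 : dist (f (g x)) (f₀ (g x)) < ε / 2 :=
      lt_of_le_of_lt (dist_apply_le f f₀ (g x)) hdf
    have h2 : dist (f₀ (g x)) (f₀ (g₀ x)) < ε / 2 :=
      H₁ (lt_of_le_of_lt (dist_apply_le g g₀ x) hdg)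
    calc dist ((f * g) x) ((f₀ * g₀) x) ≤ dist (f (g x)) (f₀ (g x)) + dist (f₀ (g x)) (f₀ (g₀ x)) :=
          dist_triangle _ _ _
      _ < ε / 2 + ε / 2 := by exact add_lt_add h1 h2
      _ = ε := by ring
  continuous_inv := by
    rw [Metric.continuous_iff]
    intro f₀ ε hε
    obtain ⟨δ, hδ, H⟩ := Metric.uniformContinuous_iff.mp
      (CompactSpace.uniformContinuous_of_continuous f₀.symm.continuous) ε hε
    refine ⟨δ, hδ, ?_⟩
    intro g hdg
    rw [dist_lt_iff' _ _ hε]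
    intro y
    have key : dist (g (g.symm y)) (f₀ (g.symm y)) < δ :=
      lt_of_le_of_lt (dist_apply_le g f₀ (g.symm y)) hdg
    have h2 := H key
    have h3 : dist (f₀.symm (g (g.symm y))) (f₀.symm (f₀ (g.symm y))) < ε := h2
    rw [Homeomorph.apply_symm_apply, Homeomorph.symm_apply_apply] at h3
    rw [dist_comm] at h3
    simpa using h3
end Homeomorph

/-! ### Steinitz (supernatural) numbers -/

/-- A Steinitz number: a formal product of primes with exponents in `ℕ∞`. -/
def SteinitzNum : Type := Nat.Primes → ℕ∞

namespace SteinitzNum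

/-- The Steinitz number associated to a natural number. -/
def ofNat (n : ℕ) : SteinitzNum := fun p => (n.factorization (p : ℕ) : ℕ∞)

/-- Multiplication of Steinitz numbers adds the exponents at each prime. -/
instance : Mul SteinitzNum := ⟨fun a b p => a p + b p⟩

/-- The least common multiple of a collection of positive integers, as a Steinitz number:
its exponent at `p` is the supremum of the `p`-adic valuations of the elements. -/
def lcmSet (S : Set ℕ) : SteinitzNum := fun p => ⨆ n ∈ S, (n.factorization (p : ℕ) : ℕ∞)

/-- Two Steinitz numbers are asymptotically equivalent if they agree after multiplication
by positive integers. -/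
def AsympEquiv (a b : SteinitzNum) : Prop :=
  ∃ n₀ m₀ : ℕ, 0 < n₀ ∧ 0 < m₀ ∧ ofNat n₀ * a = ofNat m₀ * b

/-- The prime spectrum of a Steinitz number: primes with nonzero exponent. -/
def primeSpectrum (a : SteinitzNum) : Set Nat.Primes := { p | a p ≠ 0 }

/-- The finite prime spectrum: primes with finite nonzero exponent. -/
def finitePrimeSpectrum (a : SteinitzNum) : Set Nat.Primes := { p | a p ≠ 0 ∧ a p ≠ ⊤ }

/-- The infinite prime spectrum: primes with infinite exponent. -/
def infinitePrimeSpectrum (a : SteinitzNum) : Set Nat.Primes := { p | a p = ⊤ }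

end SteinitzNum

/-! ### Steinitz orders for topological groups -/

/-- The Steinitz order of a topological group: the LCM of the orders of the finite
quotients `G/N` over open normal subgroups `N ⊆ G`. -/
def steinitzOrder (G : Type*) [Group G] [TopologicalSpace G] : SteinitzNum :=
  SteinitzNum.lcmSet
    { n | ∃ N : Subgroup G, N.Normal ∧ IsOpen (N : Set G) ∧ n = Nat.card (G ⧸ N) }

/-- The Steinitz order of a subgroup `D` of a topological group `G`: the LCM of the
cardinalities `|D/(N ∩ D)|` over open normal subgroups `N ⊆ G`. -/
def steinitzOrderOfSubgroup {G : Type*} [Group G] [TopologicalSpace G] (D : Subgroup G) :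
    SteinitzNum :=
  SteinitzNum.lcmSet
    { n | ∃ N : Subgroup G, N.Normal ∧ IsOpen (N : Set G) ∧
        n = Nat.card (↥D ⧸ (N.subgroupOf D)) }

/-- The relative Steinitz order of a subgroup `D` of a topological group `G`: the LCM of the
cardinalities `|G/(N · D)|` over open normal subgroups `N ⊆ G`. -/
def steinitzRelativeOrder {G : Type*} [Group G] [TopologicalSpace G] (D : Subgroup G) :
    SteinitzNum :=
  SteinitzNum.lcmSet
    { n | ∃ N : Subgroup G, N.Normal ∧ IsOpen (N : Set G) ∧ n = Nat.card (G ⧸ (N ⊔ D)) }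

/-- A profinite (compact Hausdorff totally disconnected) topological group is topologically
Noetherian if every increasing chain of closed subgroups has a maximal element. -/
def TopologicallyNoetherian (G : Type*) [Group G] [TopologicalSpace G] : Prop :=
  ∀ c : ℕ → Subgroup G, (∀ i, IsClosed (c i : Set G)) → Monotone c → ∃ i₀, ∀ i, c i ≤ c i₀

/-! ### Cantor actions -/

section CantorActions

variable {X : Type*} [MetricSpace X] {Γ : Type*} [Group Γ]

/-- An action is minimal if every orbit is dense. -/
def IsMinimalAction (Φ : Γ →* (X ≃ₜ X)) : Prop :=
  ∀ x : X, Dense (Set.range fun g : Γ => Φ g x)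

/-- An action is equicontinuous if it satisfies the uniform `ε`-`δ` condition with respect
to the metric. -/
def IsEquicontinuousAction (Φ : Γ →* (X ≃ₜ X)) : Prop :=
  ∀ ε : ℝ, 0 < ε → ∃ δ : ℝ, 0 < δ ∧
    ∀ x y : X, dist x y < δ → ∀ g : Γ, dist (Φ g x) (Φ g y) < ε

variable [CompactSpace X]

/-- `G(Φ)`: the closure of the image of `Γ` in `Homeo(X)`, in the uniform topology. -/
def profiniteClosure (Φ : Γ →* (X ≃ₜ X)) : Subgroup (X ≃ₜ X) :=
  Φ.range.topologicalClosure

/-- The discriminant group: the isotropy subgroup of `G(Φ)` at `x`. -/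
def discriminant (Φ : Γ →* (X ≃ₜ X)) (x : X) : Subgroup (profiniteClosure Φ) where
  carrier := { h | (h : X ≃ₜ X) x = x }
  one_mem' := rfl
  mul_mem' := by
    intro a b ha hb
    simp only [Set.mem_setOf_eq] at *
    show ((a : X ≃ₜ X) * (b : X ≃ₜ X)) x = x
    rw [Homeomorph.mul_apply', hb, ha]
  inv_mem' := by
    intro a ha
    simp only [Set.mem_setOf_eq] at *
    show ((a : X ≃ₜ X)⁻¹) x = x
    rw [Homeomorph.inv_eq_symm]
    conv_lhs => rw [← ha]
    exact Homeomorph.symm_apply_apply _ _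

/-- The Steinitz order `Π[G(Φ)]` of a Cantor action. -/
def steinitzOrderAction (Φ : Γ →* (X ≃ₜ X)) : SteinitzNum :=
  steinitzOrder ↥(profiniteClosure Φ)

/-- The Steinitz order `Π[D(Φ,x)]` of the discriminant of a Cantor action. -/
def steinitzOrderDisc (Φ : Γ →* (X ≃ₜ X)) (x : X) : SteinitzNum :=
  steinitzOrderOfSubgroup (discriminant Φ x)

/-- The relative Steinitz order `Π[G(Φ) : D(Φ,x)]` of a Cantor action. -/
def steinitzOrderRel (Φ : Γ →* (X ≃ₜ X)) (x : X) : SteinitzNum :=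
  steinitzRelativeOrder (discriminant Φ x)

end CantorActions

/-! ### Adapted sets, holonomy and return equivalence -/

section Adapted

variable {X : Type*} [MetricSpace X] {Γ : Type*} [Group Γ]

/-- A nonempty clopen subset `U ⊆ X` is adapted to the action `Φ` if every group element
either fixes `U` or moves it entirely off of itself. -/
def IsAdaptedSet (Φ : Γ →* (X ≃ₜ X)) (U : Set X) : Prop :=
  U.Nonempty ∧ IsClopen U ∧ ∀ g : Γ, ((Φ g) '' U ∩ U).Nonempty → (Φ g) '' U = U

/-- The stabilizer subgroup `Γ_U` of an adapted set. -/
def adaptedStabilizer (Φ : Γ →* (X ≃ₜ X)) (U : Set X) : Subgroup Γ where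
  carrier := { g | (Φ g) '' U = U }
  one_mem' := by simp [show ⇑(1 : X ≃ₜ X) = id from rfl]
  mul_mem' := by
    intro a b ha hb
    simp only [Set.mem_setOf_eq] at *
    rw [map_mul]
    show ((Φ a) * (Φ b)) '' U = U
    have : (((Φ a) * (Φ b) : X ≃ₜ X) : X → X) = (Φ a) ∘ (Φ b) := rfl
    rw [this, Set.image_comp, hb, ha]
  inv_mem' := by
    intro a ha
    simp only [Set.mem_setOf_eq] at *
    rw [map_inv, Homeomorph.inv_eq_symm]
    conv_lhs => rw [← ha]
    rw [← Set.image_comp]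
    simp

/-- The homeomorphism of an invariant set induced by a homeomorphism of `X`. -/
def restrictHomeo (h : X ≃ₜ X) {U : Set X} (hU : h '' U = U) : U ≃ₜ U :=
  (h.image U).trans (Homeomorph.setCongr hU)

@[simp] theorem restrictHomeo_coe (h : X ≃ₜ X) {U : Set X} (hU : h '' U = U) (x : U) :
    (restrictHomeo h hU x : X) = h x := rfl

/-- The holonomy homomorphism of an adapted set: restriction of the stabilizer to `U`. -/
def holonomyHom (Φ : Γ →* (X ≃ₜ X)) (U : Set X) :
    adaptedStabilizer Φ U →* (↥U ≃ₜ ↥U) where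
  toFun g := restrictHomeo (Φ (g : Γ)) g.2
  map_one' := by
    ext x
    show ((restrictHomeo (Φ ((1 : adaptedStabilizer Φ U) : Γ)) _ x : X) = _)
    simp
  map_mul' := by
    intro a b
    ext x
    show ((restrictHomeo (Φ ((a * b : adaptedStabilizer Φ U) : Γ)) _ x : X) = _)
    simp only [restrictHomeo_coe, Subgroup.coe_mul, map_mul]
    rfl

/-- The holonomy group `H_U` of an adapted set: the image of the stabilizer in `Homeo(U)`. -/
def holonomyGroup (Φ : Γ →* (X ≃ₜ X)) (U : Set X) : Subgroup (↥U ≃ₜ ↥U) :=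
  (holonomyHom Φ U).range

end Adapted

/-- Two Cantor actions are return equivalent if they admit adapted sets whose holonomy
actions are isomorphic, via a homeomorphism between the adapted sets together with a
compatible isomorphism of the holonomy groups. -/
def ReturnEquivalent
    {X₁ : Type*} [MetricSpace X₁] {Γ₁ : Type*} [Group Γ₁]
    {X₂ : Type*} [MetricSpace X₂] {Γ₂ : Type*} [Group Γ₂]
    (Φ₁ : Γ₁ →* (X₁ ≃ₜ X₁)) (Φ₂ : Γ₂ →* (X₂ ≃ₜ X₂)) : Prop :=
  ∃ (U₁ : Set X₁) (U₂ : Set X₂), IsAdaptedSet Φ₁ U₁ ∧ IsAdaptedSet Φ₂ U₂ ∧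
    ∃ (h : ↥U₁ ≃ₜ ↥U₂) (θ : holonomyGroup Φ₁ U₁ ≃* holonomyGroup Φ₂ U₂),
      ∀ k : holonomyGroup Φ₁ U₁,
        ((θ k : ↥U₂ ≃ₜ ↥U₂)) = h.symm.trans (((k : ↥U₁ ≃ₜ ↥U₁)).trans h)

section Regularity

variable {X : Type*} [MetricSpace X]

/-- An action of a group `H` on `X` through a homomorphism `ρ : H →* Homeo(X)` is locally
quasi-analytic if there is `ε > 0` so that for every nonempty open `U` of diameter less
than `ε`, any element acting as the identity on a nonempty open subset `V ⊆ U` with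
`ρ g (V) = V` acts as the identity on all of `U`. -/
def IsLocallyQuasiAnalytic {H : Type*} [Group H] (ρ : H →* (X ≃ₜ X)) : Prop :=
  ∃ ε : ℝ, 0 < ε ∧ ∀ U : Set X, IsOpen U → U.Nonempty → Metric.diam U < ε →
    ∀ V : Set X, V ⊆ U → IsOpen V → V.Nonempty →
      ∀ g : H, (ρ g) '' V = V → (∀ x ∈ V, ρ g x = x) → ∀ x ∈ U, ρ g x = x

variable [CompactSpace X] {Γ : Type*} [Group Γ]

/-- A Cantor action is stable if the induced action of `G(Φ)` on `X` is locally
quasi-analytic; otherwise it is wild. -/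
def IsStableAction (Φ : Γ →* (X ≃ₜ X)) : Prop :=
  IsLocallyQuasiAnalytic (profiniteClosure Φ).subtype

/-- An action is topologically free if the set of points fixed by some nontrivial group
element is meagre. -/
def IsTopologicallyFree (Φ : Γ →* (X ≃ₜ X)) : Prop :=
  IsMeagre { x : X | ∃ g : Γ, g ≠ 1 ∧ Φ g x = x }

end Regularity

/-! ### Group chains and their inverse limits -/

section GroupChains

variable {Γ : Type*} [Group Γ]

/-- The finite quotient `Γ_ℓ / C_ℓ` of an element of a group chain by its normal core. -/
def chainQuot (Γs : ℕ → Subgroup Γ) (ℓ : ℕ) : Type _ :=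
  ↥(Γs ℓ) ⧸ ((Γs ℓ).normalCore.subgroupOf (Γs ℓ))

instance (Γs : ℕ → Subgroup Γ) (ℓ : ℕ) : Group (chainQuot Γs ℓ) :=
  inferInstanceAs (Group (↥(Γs ℓ) ⧸ ((Γs ℓ).normalCore.subgroupOf (Γs ℓ))))

/-- The bonding homomorphism `Γ_{ℓ+1}/C_{ℓ+1} → Γ_ℓ/C_ℓ` induced by the inclusion
`Γ_{ℓ+1} ⊆ Γ_ℓ`. -/
def chainBond (Γs : ℕ → Subgroup Γ) (hle : ∀ ℓ, Γs (ℓ + 1) ≤ Γs ℓ) (ℓ : ℕ) :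
    chainQuot Γs (ℓ + 1) →* chainQuot Γs ℓ :=
  QuotientGroup.map _ _ (Subgroup.inclusion (hle ℓ)) (by
    intro g hg
    simp only [Subgroup.mem_comap, Subgroup.mem_subgroupOf] at hg ⊢
    exact Subgroup.normalCore_mono (hle ℓ) hg)

/-- The inverse limit `D_∞ = lim← Γ_ℓ/C_ℓ`, as the subgroup of the product consisting of
the sequences compatible with the bonding maps. -/
def chainDinf (Γs : ℕ → Subgroup Γ) (hle : ∀ ℓ, Γs (ℓ + 1) ≤ Γs ℓ) :
    Subgroup (∀ ℓ, chainQuot Γs ℓ) where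
  carrier := { z | ∀ ℓ, chainBond Γs hle ℓ (z (ℓ + 1)) = z ℓ }
  one_mem' := fun ℓ => by simp only [Pi.one_apply, map_one]
  mul_mem' := by
    intro a b ha hb ℓ
    simp only [Pi.mul_apply, map_mul, ha ℓ, hb ℓ]
  inv_mem' := by
    intro a ha ℓ
    simp only [Pi.inv_apply, map_inv, ha ℓ]

end GroupChains

/-- The stabilizer subgroups of a nested pair of adapted sets are nested. -/
theorem adaptedStabilizer_mono {X : Type*} [MetricSpace X] {Γ : Type*} [Group Γ]
    (Φ : Γ →* (X ≃ₜ X)) {U V : Set X} (hVU : V ⊆ U)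
    (hU : IsAdaptedSet Φ U) (hV : IsAdaptedSet Φ V) :
    adaptedStabilizer Φ V ≤ adaptedStabilizer Φ U := by
  intro g hg
  have hgV : (Φ g) '' V = V := hg
  have hne : ((Φ g) '' U ∩ U).Nonempty := by
    obtain ⟨v, hv⟩ := hV.1
    refine ⟨v, ?_, hVU hv⟩
    have hv' : v ∈ (Φ g) '' V := by rw [hgV]; exact hv
    exact Set.image_mono hVU hv'
  exact hU.2.2 g hne
/-! ### Auxiliary development -/

section Aux

theorem SteinitzNum.lcmSet_le_of_dvd {S T : Set ℕ}
    (h : ∀ n ∈ S, ∃ m ∈ T, n ∣ m ∧ m ≠ 0) (p : Nat.Primes) :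
    (⨆ n ∈ S, ((n.factorization (p : ℕ) : ℕ∞))) ≤
      ⨆ n ∈ T, ((n.factorization (p : ℕ) : ℕ∞)) := by
  refine iSup₂_le fun n hn => ?_
  obtain ⟨m, hm, hdvd, hm0⟩ := h n hn
  have hn0 : n ≠ 0 := by rintro rfl; exact hm0 (zero_dvd_iff.mp hdvd)
  have hfle : n.factorization ≤ m.factorization :=
    (Nat.factorization_le_iff_dvd hn0 hm0).mpr hdvd
  calc ((n.factorization (p : ℕ) : ℕ∞)) ≤ (m.factorization (p : ℕ) : ℕ∞) := by
        exact_mod_cast hfle (p : ℕ)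
    _ ≤ _ := le_iSup₂ (f := fun n (_ : n ∈ T) => ((n.factorization (p : ℕ) : ℕ∞))) m hm

theorem SteinitzNum.lcmSet_eq_of_dvd {S T : Set ℕ}
    (h1 : ∀ n ∈ S, ∃ m ∈ T, n ∣ m ∧ m ≠ 0)
    (h2 : ∀ m ∈ T, ∃ n ∈ S, m ∣ n ∧ n ≠ 0) :
    SteinitzNum.lcmSet S = SteinitzNum.lcmSet T := by
  funext p
  exact le_antisymm (SteinitzNum.lcmSet_le_of_dvd h1 p) (SteinitzNum.lcmSet_le_of_dvd h2 p)

theorem himage_mul {X : Type*} [TopologicalSpace X] (a b : X ≃ₜ X) (s : Set X) :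
    (a * b) '' s = a '' (b '' s) := by
  rw [← Set.image_comp]; rfl

theorem himage_one {X : Type*} [TopologicalSpace X] (s : Set X) :
    (1 : X ≃ₜ X) '' s = s := Set.image_id s

end Aux

section Main

variable {X : Type*} [MetricSpace X] [CompactSpace X] [Nonempty X]
  {Γ : Type*} [Group Γ]

/-- Bundled hypotheses of the main theorem. -/
structure CAS (Φ : Γ →* (X ≃ₜ X)) (x : X) (U : ℕ → Set X) : Prop where
  hmin : IsMinimalAction Φ
  heqc : IsEquicontinuousAction Φ
  hadapt : ∀ ℓ, IsAdaptedSet Φ (U ℓ)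
  hx : ∀ ℓ, x ∈ U ℓ
  hmono : ∀ ℓ, U (ℓ + 1) ⊆ U ℓ
  hinter : (⋂ ℓ, U ℓ) = {x}

namespace CAS

variable {Φ : Γ →* (X ≃ₜ X)} {x : X} {U : ℕ → Set X} (S : CAS Φ x U)
include S

theorem hUle : ∀ {ℓ m : ℕ}, ℓ ≤ m → U m ⊆ U ℓ := by
  intro ℓ m h
  induction h with
  | refl => exact subset_rfl
  | step h ih => exact (S.hmono _).trans ih
  
theorem gamma_mono {ℓ m : ℕ} (h : ℓ ≤ m) :
    adaptedStabilizer Φ (U m) ≤ adaptedStabilizer Φ (U ℓ) :=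
  adaptedStabilizer_mono Φ (S.hUle h) (S.hadapt ℓ) (S.hadapt m)

theorem core_mono {ℓ m : ℕ} (h : ℓ ≤ m) :
    (adaptedStabilizer Φ (U m)).normalCore ≤ (adaptedStabilizer Φ (U ℓ)).normalCore :=
  Subgroup.normalCore_mono (S.gamma_mono h)

theorem eqOrDisj {ℓ : ℕ} {g h : Γ} (hne : (Φ g '' U ℓ ∩ Φ h '' U ℓ).Nonempty) :
    Φ g '' U ℓ = Φ h '' U ℓ := by
  obtain ⟨z, ⟨u, hu, hz1⟩, ⟨v, hv, hz2⟩⟩ := hne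
  have h1 : (Φ (h⁻¹ * g) '' U ℓ ∩ U ℓ).Nonempty := by
    refine ⟨v, ⟨u, hu, ?_⟩, hv⟩
    rw [map_mul, Homeomorph.mul_apply, hz1, ← hz2, map_inv, Homeomorph.inv_eq_symm]
    exact Homeomorph.symm_apply_apply _ _
  have h2 := (S.hadapt ℓ).2.2 _ h1
  have h3 : Φ h '' (Φ (h⁻¹ * g) '' U ℓ) = Φ h '' U ℓ := by rw [h2]
  rw [← himage_mul, ← map_mul, mul_inv_cancel_left] at h3
  exact h3

theorem sInterSingle : ∀ y ∈ (⋂ ℓ, U ℓ), y = x := by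
  intro y hy
  have := S.hinter ▸ hy
  simpa using this

theorem cover (ℓ : ℕ) (y : X) : ∃ g : Γ, y ∈ Φ g '' U ℓ := by
  have hU := S.hadapt ℓ
  obtain ⟨z, ⟨g, hg⟩, hzU⟩ := (S.hmin y).exists_mem_open hU.2.1.2 hU.1
  have hg' : Φ g y = z := hg
  refine ⟨g⁻¹, Φ g y, by rw [hg']; exact hzU, ?_⟩
  rw [map_inv, Homeomorph.inv_eq_symm]; exact Homeomorph.symm_apply_apply _ _

theorem trans_self (ℓ : ℕ) : Φ (1 : Γ) '' U ℓ = U ℓ := by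
  rw [map_one, himage_one]

/-- A finite set of coset representatives for the translates. -/
theorem exists_finrep (ℓ : ℕ) : ∃ t : Finset Γ,
    ∀ g : Γ, ∃ h ∈ t, Φ g '' U ℓ = Φ h '' U ℓ := by
  have hU := S.hadapt ℓ
  have hcov : (Set.univ : Set X) ⊆ ⋃ g : Γ, Φ g '' U ℓ := by
    intro y _
    obtain ⟨g, hg⟩ := S.cover ℓ y
    exact Set.mem_iUnion.mpr ⟨g, hg⟩
  obtain ⟨t, ht⟩ := isCompact_univ.elim_finite_subcover (fun g : Γ => Φ g '' U ℓ)
    (fun g => ((Homeomorph.isOpen_image (Φ g)).mpr hU.2.1.2)) hcov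
  refine ⟨t, fun g => ?_⟩
  obtain ⟨u, hu⟩ := hU.1
  have : Φ g u ∈ ⋃ h ∈ t, Φ h '' U ℓ := ht (Set.mem_univ _)
  obtain ⟨h, hh, hmem⟩ := Set.mem_iUnion₂.mp this
  exact ⟨h, hh, S.eqOrDisj ⟨Φ g u, ⟨u, hu, rfl⟩, hmem⟩⟩

/-- The gap: points close to a translate belong to it. -/
theorem exists_gap (ℓ : ℕ) : ∃ η > 0, ∀ (g : Γ) (z w : X),
    w ∈ Φ g '' U ℓ → dist z w < η → z ∈ Φ g '' U ℓ := by
  obtain ⟨t, ht⟩ := S.exists_finrep ℓ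
  have hU := S.hadapt ℓ
  have key : ∀ g : Γ, ∃ η > 0, ∀ z w, w ∈ Φ g '' U ℓ → dist z w < η → z ∈ Φ g '' U ℓ := by
    intro g
    have hcpt : IsCompact (Φ g '' U ℓ) := (((Homeomorph.isClosed_image (Φ g)).mpr
      hU.2.1.1)).isCompact
    obtain ⟨δ, hδ, hsub⟩ := hcpt.exists_thickening_subset_open
      ((Homeomorph.isOpen_image (Φ g)).mpr hU.2.1.2) subset_rfl
    refine ⟨δ, hδ, fun z w hw hd => hsub ?_⟩
    exact Metric.mem_thickening_iff.mpr ⟨w, hw, hd⟩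
  choose η hηpos hη using key
  rcases t.eq_empty_or_nonempty with rfl | htne
  · obtain ⟨h, hh, _⟩ := ht 1
    exact absurd hh (Finset.notMem_empty _)
  refine ⟨t.inf' htne η, ?_, ?_⟩
  · exact (Finset.lt_inf'_iff htne).mpr fun h _ => hηpos h
  · intro g z w hw hd
    obtain ⟨h, hh, heq⟩ := ht g
    rw [heq] at hw ⊢
    exact hη h z w hw (lt_of_lt_of_le hd (Finset.inf'_le _ hh))

/-- Translates at deep levels are uniformly small. -/
theorem small {ε : ℝ} (hε : 0 < ε) : ∃ ℓ₀ : ℕ, ∀ ℓ, ℓ₀ ≤ ℓ → ∀ (g : Γ),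
    ∀ y ∈ Φ g '' U ℓ, ∀ z ∈ Φ g '' U ℓ, dist y z < ε := by
  obtain ⟨δ, hδ, hδprop⟩ := S.heqc ε hε
  -- find ℓ₀ with U ℓ₀ ⊆ ball x (δ/2)
  have hball : ∃ ℓ₀, U ℓ₀ ⊆ Metric.ball x (δ / 2) := by
    by_contra hcon
    push_neg at hcon
    set K : ℕ → Set X := fun ℓ => U ℓ \ Metric.ball x (δ / 2) with hK
    have hKne : ∀ ℓ, (K ℓ).Nonempty := by
      intro ℓ
      obtain ⟨y, hy, hy2⟩ := Set.not_subset.mp (hcon ℓ)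
      exact ⟨y, hy, hy2⟩
    have hKcl : ∀ ℓ, IsClosed (K ℓ) :=
      fun ℓ => ((S.hadapt ℓ).2.1.1).sdiff Metric.isOpen_ball
    have hKmono : ∀ ℓ, K (ℓ + 1) ⊆ K ℓ :=
      fun ℓ => Set.diff_subset_diff_left (S.hmono ℓ)
    obtain ⟨y, hy⟩ := IsCompact.nonempty_iInter_of_sequence_nonempty_isCompact_isClosed
      K hKmono hKne ((hKcl 0).isCompact) hKcl
    have hyU : y ∈ ⋂ ℓ, U ℓ := Set.mem_iInter.mpr fun ℓ =>
      (Set.mem_iInter.mp hy ℓ).1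
    have hyx : y = x := S.sInterSingle y hyU
    have := (Set.mem_iInter.mp hy 0).2
    exact this (hyx ▸ Metric.mem_ball_self (by linarith))
  obtain ⟨ℓ₀, h₀⟩ := hball
  refine ⟨ℓ₀, fun ℓ hℓ g y hy z hz => ?_⟩
  obtain ⟨u, hu, rfl⟩ := hy
  obtain ⟨v, hv, rfl⟩ := hz
  have hu' : u ∈ Metric.ball x (δ/2) := h₀ (S.hUle hℓ hu)
  have hv' : v ∈ Metric.ball x (δ/2) := h₀ (S.hUle hℓ hv)
  have : dist u v < δ := by
    have := dist_triangle u x v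
    rw [Metric.mem_ball] at hu' hv'
    rw [dist_comm x v] at this
    linarith
  exact hδprop u v this g

end CAS

end Main
section Main2

variable {X : Type*} [MetricSpace X] [CompactSpace X] [Nonempty X]
  {Γ : Type*} [Group Γ]

/-- The canonical map `Γ →* G(Φ)`. -/
def phiG (Φ : Γ →* (X ≃ₜ X)) : Γ →* ↥(profiniteClosure Φ) :=
  Φ.codRestrict _ (fun g => Φ.range.le_topologicalClosure ⟨g, rfl⟩)

@[simp] theorem phiG_coe (Φ : Γ →* (X ≃ₜ X)) (g : Γ) :
    ((phiG Φ g : ↥(profiniteClosure Φ)) : X ≃ₜ X) = Φ g := rfl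

/-- The kernel `N_ℓ ⊆ G(Φ)` of the action on the translates of `U ℓ`. -/
def NN (Φ : Γ →* (X ≃ₜ X)) (U : ℕ → Set X) (ℓ : ℕ) :
    Subgroup ↥(profiniteClosure Φ) where
  carrier := { ga | ∀ g : Γ, (ga : X ≃ₜ X) '' (Φ g '' U ℓ) = Φ g '' U ℓ }
  one_mem' := fun g => by
    show ((1 : X ≃ₜ X)) '' _ = _
    rw [himage_one]
  mul_mem' := by
    intro a b ha hb g
    show ((a : X ≃ₜ X) * (b : X ≃ₜ X)) '' _ = _
    rw [himage_mul, hb g, ha g]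
  inv_mem' := by
    intro a ha g
    rw [Subgroup.coe_inv]
    conv_lhs => rw [← ha g]
    rw [← himage_mul, inv_mul_cancel, himage_one]

theorem mem_NN_iff {Φ : Γ →* (X ≃ₜ X)} {U : ℕ → Set X} {ℓ : ℕ}
    {ga : ↥(profiniteClosure Φ)} :
    ga ∈ NN Φ U ℓ ↔ ∀ g : Γ, (ga : X ≃ₜ X) '' (Φ g '' U ℓ) = Φ g '' U ℓ := Iff.rfl

theorem mem_adaptedStabilizer_iff {Φ : Γ →* (X ≃ₜ X)} {V : Set X} {g : Γ} :
    g ∈ adaptedStabilizer Φ V ↔ Φ g '' V = V := Iff.rfl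

theorem mem_normalCore_iff {H : Subgroup Γ} {g : Γ} :
    g ∈ H.normalCore ↔ ∀ b : Γ, b * g * b⁻¹ ∈ H := Iff.rfl

/-- Elements of the closure are uniformly approximated by elements of `Γ`. -/
theorem exists_close {Φ : Γ →* (X ≃ₜ X)} (ga : ↥(profiniteClosure Φ)) {ε : ℝ}
    (hε : 0 < ε) : ∃ g₀ : Γ, ∀ y, dist ((ga : X ≃ₜ X) y) (Φ g₀ y) < ε := by
  have hmem : (ga : X ≃ₜ X) ∈ closure (Φ.range : Set (X ≃ₜ X)) := by
    have h2 : (ga : X ≃ₜ X) ∈ (profiniteClosure Φ : Set (X ≃ₜ X)) := ga.2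
    unfold profiniteClosure at h2
    rwa [Subgroup.topologicalClosure_coe] at h2
  obtain ⟨b, hb, hdist⟩ := Metric.mem_closure_iff.mp hmem ε hε
  obtain ⟨g₀, rfl⟩ := MonoidHom.mem_range.mp hb
  exact ⟨g₀, fun y => lt_of_le_of_lt (Homeomorph.dist_apply_le _ _ y) hdist⟩

namespace CAS

variable {Φ : Γ →* (X ≃ₜ X)} {x : X} {U : ℕ → Set X} (S : CAS Φ x U)
include S

/-- If `f` maps every translate into itself, it maps every translate onto itself. -/
theorem eq_of_subset {ℓ : ℕ} (f : X ≃ₜ X)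
    (hsub : ∀ g : Γ, f '' (Φ g '' U ℓ) ⊆ Φ g '' U ℓ) (g : Γ) :
    f '' (Φ g '' U ℓ) = Φ g '' U ℓ := by
  refine le_antisymm (hsub g) ?_
  intro w hw
  obtain ⟨h, hz⟩ := S.cover ℓ (f.symm w)
  have hfz : f (f.symm w) ∈ Φ h '' U ℓ := hsub h ⟨f.symm w, hz, rfl⟩
  rw [Homeomorph.apply_symm_apply] at hfz
  have heq : Φ h '' U ℓ = Φ g '' U ℓ := S.eqOrDisj ⟨w, hfz, hw⟩
  rw [heq] at hz
  exact ⟨f.symm w, hz, Homeomorph.apply_symm_apply f w⟩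

/-- A homeomorphism uniformly close to `Φ g₀` permutes the translates the same way. -/
theorem perm_of_close {ℓ : ℕ} {η : ℝ}
    (hgap : ∀ (g : Γ) (z w : X), w ∈ Φ g '' U ℓ → dist z w < η → z ∈ Φ g '' U ℓ)
    (f : X ≃ₜ X) (g₀ : Γ) (hcl : ∀ y, dist (f y) (Φ g₀ y) < η) (h : Γ) :
    f '' (Φ h '' U ℓ) = Φ (g₀ * h) '' U ℓ := by
  have hsub : ∀ h : Γ, f '' (Φ h '' U ℓ) ⊆ Φ (g₀ * h) '' U ℓ := by
    intro h w hw
    obtain ⟨y, hy, rfl⟩ := hw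
    have h1 : Φ g₀ y ∈ Φ (g₀ * h) '' U ℓ := by
      rw [map_mul, himage_mul]
      exact ⟨y, hy, rfl⟩
    exact hgap (g₀ * h) (f y) (Φ g₀ y) h1 (hcl y)
  refine le_antisymm (hsub h) ?_
  intro w hw
  obtain ⟨h', hz⟩ := S.cover ℓ (f.symm w)
  have hfz : w ∈ Φ (g₀ * h') '' U ℓ := by
    have := hsub h' ⟨f.symm w, hz, rfl⟩
    rwa [Homeomorph.apply_symm_apply] at this
  have heq : Φ (g₀ * h') '' U ℓ = Φ (g₀ * h) '' U ℓ := S.eqOrDisj ⟨w, hfz, hw⟩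
  have heq2 : Φ h' '' U ℓ = Φ h '' U ℓ := by
    have h3 : Φ g₀⁻¹ '' (Φ (g₀ * h') '' U ℓ) = Φ g₀⁻¹ '' (Φ (g₀ * h) '' U ℓ) := by
      rw [heq]
    rwa [← himage_mul, ← himage_mul, ← map_mul, ← map_mul, inv_mul_cancel_left,
      inv_mul_cancel_left] at h3
  rw [heq2] at hz
  exact ⟨f.symm w, hz, Homeomorph.apply_symm_apply f w⟩

theorem N_isOpen (ℓ : ℕ) : IsOpen ((NN Φ U ℓ : Set ↥(profiniteClosure Φ))) := by
  obtain ⟨η, hη, hgap⟩ := S.exists_gap ℓ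
  rw [Metric.isOpen_iff]
  intro ga hga
  obtain ⟨g₀, hg₀⟩ := exists_close ga (half_pos hη)
  refine ⟨η / 2, half_pos hη, ?_⟩
  intro hb hdist
  rw [Metric.mem_ball, Subtype.dist_eq] at hdist
  have hclose : ∀ y, dist ((hb : X ≃ₜ X) y) (Φ g₀ y) < η := by
    intro y
    calc dist ((hb : X ≃ₜ X) y) (Φ g₀ y)
        ≤ dist ((hb : X ≃ₜ X) y) ((ga : X ≃ₜ X) y) + dist ((ga : X ≃ₜ X) y) (Φ g₀ y) :=
          dist_triangle _ _ _
      _ < η / 2 + η / 2 := add_lt_add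
          (lt_of_le_of_lt (Homeomorph.dist_apply_le _ _ y) hdist) (hg₀ y)
      _ = η := add_halves η
  refine mem_NN_iff.mpr fun h => ?_
  have h1 := S.perm_of_close hgap (hb : X ≃ₜ X) g₀ hclose h
  have h2 := S.perm_of_close hgap (ga : X ≃ₜ X) g₀ (fun y => lt_of_lt_of_le (hg₀ y)
    (by linarith)) h
  rw [h1, ← h2]
  exact mem_NN_iff.mp hga h

theorem N_normal (ℓ : ℕ) : (NN Φ U ℓ).Normal := by
  constructor
  intro n hn ga
  obtain ⟨η, hη, hgap⟩ := S.exists_gap ℓ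
  obtain ⟨g₁, hg₁⟩ := exists_close ga⁻¹ hη
  refine mem_NN_iff.mpr fun h => ?_
  rw [Subgroup.coe_mul, Subgroup.coe_mul, himage_mul, himage_mul,
    S.perm_of_close hgap _ g₁ hg₁ h, mem_NN_iff.mp hn (g₁ * h),
    ← S.perm_of_close hgap _ g₁ hg₁ h, ← himage_mul, ← Subgroup.coe_mul,
    mul_inv_cancel, OneMemClass.coe_one, himage_one]

theorem N_mono {ℓ m : ℕ} (hlm : ℓ ≤ m) : NN Φ U m ≤ NN Φ U ℓ := by
  intro n hn
  have hsub : ∀ g : Γ, (n : X ≃ₜ X) '' (Φ g '' U ℓ) ⊆ Φ g '' U ℓ := by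
    intro g w hw
    obtain ⟨y, hy, rfl⟩ := hw
    obtain ⟨u, hu, rfl⟩ := hy
    obtain ⟨h, hh⟩ := S.cover m u
    have hsub2 : Φ h '' U m ⊆ U ℓ := by
      have h1 : Φ h '' U ℓ = Φ (1 : Γ) '' U ℓ :=
        S.eqOrDisj ⟨u, Set.image_mono (S.hUle hlm) hh, by
          rw [S.trans_self]; exact hu⟩
      rw [S.trans_self] at h1
      exact h1 ▸ Set.image_mono (S.hUle hlm)
    have h2 : (n : X ≃ₜ X) (Φ g u) ∈ Φ (g * h) '' U m := by
      have hmem : Φ g u ∈ Φ (g * h) '' U m := by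
        rw [map_mul, himage_mul]
        exact Set.mem_image_of_mem _ hh
      rw [← mem_NN_iff.mp hn (g * h)]
      exact Set.mem_image_of_mem _ hmem
    have h3 : Φ (g * h) '' U m ⊆ Φ g '' U ℓ := by
      rw [map_mul, himage_mul]
      exact Set.image_mono hsub2
    exact h3 h2
  exact fun g => S.eq_of_subset (n : X ≃ₜ X) hsub g

end CAS

end Main2
section Main3

variable {X : Type*} [MetricSpace X] [CompactSpace X] [Nonempty X]
  {Γ : Type*} [Group Γ]

/-- The isotropy subgroup of `U ℓ` in `G(Φ)`. -/
def Sb (Φ : Γ →* (X ≃ₜ X)) (U : ℕ → Set X) (ℓ : ℕ) :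
    Subgroup ↥(profiniteClosure Φ) where
  carrier := { ga | (ga : X ≃ₜ X) '' U ℓ = U ℓ }
  one_mem' := by
    show ((1 : X ≃ₜ X)) '' _ = _
    rw [himage_one]
  mul_mem' := by
    intro a b ha hb
    show ((a : X ≃ₜ X) * (b : X ≃ₜ X)) '' _ = _
    rw [himage_mul, hb, ha]
  inv_mem' := by
    intro a ha
    rw [Set.mem_setOf_eq, Subgroup.coe_inv]
    conv_lhs => rw [← ha]
    rw [← himage_mul, inv_mul_cancel, himage_one]

theorem mem_Sb_iff {Φ : Γ →* (X ≃ₜ X)} {U : ℕ → Set X} {ℓ : ℕ}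
    {ga : ↥(profiniteClosure Φ)} :
    ga ∈ Sb Φ U ℓ ↔ (ga : X ≃ₜ X) '' U ℓ = U ℓ := Iff.rfl

theorem mem_discriminant_iff {Φ : Γ →* (X ≃ₜ X)} {x : X}
    {d : ↥(profiniteClosure Φ)} :
    d ∈ discriminant Φ x ↔ (d : X ≃ₜ X) x = x := Iff.rfl

namespace CAS

variable {Φ : Γ →* (X ≃ₜ X)} {x : X} {U : ℕ → Set X} (S : CAS Φ x U)
include S

/-- The projection `Γ → G(Φ)/N_ℓ` (as a bare function on the coset space). -/
theorem mem_NN_phiG_iff {ℓ : ℕ} {g : Γ} :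
    phiG Φ g ∈ NN Φ U ℓ ↔ g ∈ (adaptedStabilizer Φ (U ℓ)).normalCore := by
  rw [mem_normalCore_iff]
  constructor
  · intro hmem b
    have h1 := mem_NN_iff.mp hmem b⁻¹
    rw [phiG_coe] at h1
    show Φ (b * g * b⁻¹) '' U ℓ = U ℓ
    rw [map_mul, map_mul, himage_mul, himage_mul, h1, ← himage_mul, ← map_mul,
      mul_inv_cancel, S.trans_self]
  · intro hb
    refine mem_NN_iff.mpr fun h => ?_
    have h2 := hb h⁻¹
    rw [inv_inv] at h2
    have h2' : Φ (h⁻¹ * g * h) '' U ℓ = U ℓ := h2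
    have hgh : g * h = h * (h⁻¹ * g * h) := by group
    rw [phiG_coe, ← himage_mul, ← map_mul, hgh, map_mul, himage_mul, h2']

omit S in
/-- The projection `Γ → G(Φ)/N_ℓ`. -/
def psimk (Φ : Γ →* (X ≃ₜ X)) (U : ℕ → Set X) (ℓ : ℕ) (g : Γ) :
    ↥(profiniteClosure Φ) ⧸ NN Φ U ℓ :=
  QuotientGroup.mk (phiG Φ g)

theorem psimk_eq_iff {ℓ : ℕ} {a b : Γ} :
    psimk Φ U ℓ a = psimk Φ U ℓ b ↔
      a⁻¹ * b ∈ (adaptedStabilizer Φ (U ℓ)).normalCore := by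
  rw [psimk, psimk, QuotientGroup.eq, ← S.mem_NN_phiG_iff]
  have : phiG Φ (a⁻¹ * b) = (phiG Φ a)⁻¹ * phiG Φ b := by
    rw [map_mul, map_inv]
  rw [this]

theorem rep_of_close {ℓ : ℕ} {η : ℝ}
    (hgap : ∀ (g : Γ) (z w : X), w ∈ Φ g '' U ℓ → dist z w < η → z ∈ Φ g '' U ℓ)
    (ga : ↥(profiniteClosure Φ)) (g₀ : Γ)
    (hcl : ∀ y, dist ((ga : X ≃ₜ X) y) (Φ g₀ y) < η) :
    psimk Φ U ℓ g₀ = QuotientGroup.mk ga := by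
  rw [psimk, QuotientGroup.eq]
  refine mem_NN_iff.mpr fun h => ?_
  rw [Subgroup.coe_mul, Subgroup.coe_inv, phiG_coe, himage_mul,
    S.perm_of_close hgap _ g₀ hcl h, ← map_inv, ← himage_mul, ← map_mul,
    inv_mul_cancel_left]

theorem psimk_surj (ℓ : ℕ) (q : ↥(profiniteClosure Φ) ⧸ NN Φ U ℓ) :
    ∃ g₀ : Γ, psimk Φ U ℓ g₀ = q := by
  refine QuotientGroup.induction_on q ?_
  intro ga
  obtain ⟨η, hη, hgap⟩ := S.exists_gap ℓ
  obtain ⟨g₀, hg₀⟩ := exists_close ga hη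
  exact ⟨g₀, S.rep_of_close hgap ga g₀ hg₀⟩

theorem card_quotN (ℓ : ℕ) :
    Nat.card (↥(profiniteClosure Φ) ⧸ NN Φ U ℓ) =
      ((adaptedStabilizer Φ (U ℓ)).normalCore).index := by
  have hwd : ∀ (a b : Γ),
      (QuotientGroup.leftRel ((adaptedStabilizer Φ (U ℓ)).normalCore)).r a b →
      psimk Φ U ℓ a = psimk Φ U ℓ b := by
    intro a b hab
    exact (S.psimk_eq_iff).mpr (QuotientGroup.leftRel_apply.mp hab)
  let f : (Γ ⧸ (adaptedStabilizer Φ (U ℓ)).normalCore) →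
      (↥(profiniteClosure Φ) ⧸ NN Φ U ℓ) :=
    fun q => Quotient.liftOn' q (fun g => psimk Φ U ℓ g) hwd
  have hinj : Function.Injective f := by
    intro q1 q2
    induction q1 using Quotient.inductionOn' with | h a =>
    induction q2 using Quotient.inductionOn' with | h b =>
    intro hab
    have hab' : psimk Φ U ℓ a = psimk Φ U ℓ b := hab
    exact Quotient.sound' (QuotientGroup.leftRel_apply.mpr (S.psimk_eq_iff.mp hab'))
  have hsurj : Function.Surjective f := by
    intro q
    obtain ⟨g₀, hg₀⟩ := S.psimk_surj ℓ q
    exact ⟨QuotientGroup.mk g₀, hg₀⟩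
  rw [Subgroup.index_eq_card]
  exact (Nat.card_congr (Equiv.ofBijective f ⟨hinj, hsurj⟩)).symm

theorem finite_quot_gamma (ℓ : ℕ) : Finite (Γ ⧸ adaptedStabilizer Φ (U ℓ)) := by
  classical
  obtain ⟨t, ht⟩ := S.exists_finrep ℓ
  have hwd : ∀ (a b : Γ), (QuotientGroup.leftRel (adaptedStabilizer Φ (U ℓ))).r a b →
      Φ a '' U ℓ = Φ b '' U ℓ := by
    intro a b hab
    have hr : a⁻¹ * b ∈ adaptedStabilizer Φ (U ℓ) := QuotientGroup.leftRel_apply.mp hab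
    have h1 : Φ (a⁻¹ * b) '' U ℓ = U ℓ := hr
    have h2 : Φ a '' (Φ (a⁻¹ * b) '' U ℓ) = Φ a '' U ℓ := by rw [h1]
    rw [← himage_mul, ← map_mul, mul_inv_cancel_left] at h2
    exact h2.symm
  let f : (Γ ⧸ adaptedStabilizer Φ (U ℓ)) → Set X :=
    fun q => Quotient.liftOn' q (fun g => Φ g '' U ℓ) hwd
  have hinj : Function.Injective f := by
    intro q1 q2
    induction q1 using Quotient.inductionOn' with | h a =>
    induction q2 using Quotient.inductionOn' with | h b =>
    intro hab
    have hab' : Φ a '' U ℓ = Φ b '' U ℓ := hab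
    apply Quotient.sound'
    rw [QuotientGroup.leftRel_apply]
    show Φ (a⁻¹ * b) '' U ℓ = U ℓ
    rw [map_mul, himage_mul, ← hab', ← himage_mul, ← map_mul, inv_mul_cancel,
      S.trans_self]
  have hmem : ∀ q, f q ∈ t.image fun h => Φ h '' U ℓ := by
    intro q
    induction q using Quotient.inductionOn' with | h a =>
    obtain ⟨h, hh, heq⟩ := ht a
    show Φ a '' U ℓ ∈ _
    exact Finset.mem_image.mpr ⟨h, hh, heq.symm⟩
  exact Finite.of_injective (fun q => (⟨f q, hmem q⟩ : {V // V ∈ t.image fun h => Φ h '' U ℓ}))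
    (fun a b hab => hinj (congrArg Subtype.val hab))

theorem gammaIndex_ne_zero (ℓ : ℕ) : (adaptedStabilizer Φ (U ℓ)).index ≠ 0 :=
  haveI := S.finite_quot_gamma ℓ
  Subgroup.index_ne_zero_of_finite

theorem coreIndex_ne_zero (ℓ : ℕ) :
    ((adaptedStabilizer Φ (U ℓ)).normalCore).index ≠ 0 := by
  haveI := S.finite_quot_gamma ℓ
  haveI : (adaptedStabilizer Φ (U ℓ)).FiniteIndex :=
    Subgroup.finiteIndex_of_finite_quotient
  exact Subgroup.FiniteIndex.index_ne_zero

theorem finite_quotN (ℓ : ℕ) : Finite (↥(profiniteClosure Φ) ⧸ NN Φ U ℓ) := by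
  have h := S.coreIndex_ne_zero ℓ
  rw [← S.card_quotN ℓ] at h
  exact (Nat.card_ne_zero.mp h).2

theorem finite_quot_core (ℓ : ℕ) :
    Finite (Γ ⧸ (adaptedStabilizer Φ (U ℓ)).normalCore) := by
  have h := S.coreIndex_ne_zero ℓ
  rw [Subgroup.index_eq_card] at h
  exact (Nat.card_ne_zero.mp h).2

theorem N_le_Sb (ℓ : ℕ) : NN Φ U ℓ ≤ Sb Φ U ℓ := by
  intro n hn
  have h1 := mem_NN_iff.mp hn (1 : Γ)
  rw [S.trans_self] at h1
  exact h1

theorem D_le_Sb (ℓ : ℕ) : discriminant Φ x ≤ Sb Φ U ℓ := by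
  intro d hd
  have hdx : (d : X ≃ₜ X) x = x := hd
  obtain ⟨η, hη, hgap⟩ := S.exists_gap ℓ
  obtain ⟨g₀, hg₀⟩ := exists_close d hη
  have h1 : (d : X ≃ₜ X) '' U ℓ = Φ g₀ '' U ℓ := by
    have := S.perm_of_close hgap _ g₀ hg₀ 1
    rwa [S.trans_self, mul_one] at this
  have hx1 : x ∈ Φ g₀ '' U ℓ := h1 ▸ ⟨x, S.hx ℓ, hdx⟩
  have heq : Φ g₀ '' U ℓ = Φ (1 : Γ) '' U ℓ :=
    S.eqOrDisj ⟨x, hx1, by rw [S.trans_self]; exact S.hx ℓ⟩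
  show (d : X ≃ₜ X) '' U ℓ = U ℓ
  rw [h1, heq, S.trans_self]

theorem Sb_mono {ℓ m : ℕ} (hlm : ℓ ≤ m) : Sb Φ U m ≤ Sb Φ U ℓ := by
  intro ga hga
  have h2 : (ga : X ≃ₜ X) '' U m = U m := hga
  obtain ⟨η, hη, hgap⟩ := S.exists_gap ℓ
  obtain ⟨g₀, hg₀⟩ := exists_close ga hη
  have h1 : (ga : X ≃ₜ X) '' U ℓ = Φ g₀ '' U ℓ := by
    have := S.perm_of_close hgap _ g₀ hg₀ 1
    rwa [S.trans_self, mul_one] at this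
  obtain ⟨u, hu⟩ := (S.hadapt m).1
  have hu2 : u ∈ (ga : X ≃ₜ X) '' U m := by rw [h2]; exact hu
  have hu1 : u ∈ Φ g₀ '' U ℓ := by
    rw [← h1]
    exact Set.image_mono (S.hUle hlm) hu2
  have heq : Φ g₀ '' U ℓ = Φ (1 : Γ) '' U ℓ :=
    S.eqOrDisj ⟨u, hu1, by rw [S.trans_self]; exact S.hUle hlm hu⟩
  show (ga : X ≃ₜ X) '' U ℓ = U ℓ
  rw [h1, heq, S.trans_self]

theorem card_quotSb (ℓ : ℕ) :
    Nat.card (↥(profiniteClosure Φ) ⧸ Sb Φ U ℓ) = (adaptedStabilizer Φ (U ℓ)).index := by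
  have hwd : ∀ (a b : Γ), (QuotientGroup.leftRel (adaptedStabilizer Φ (U ℓ))).r a b →
      (QuotientGroup.mk (phiG Φ a) : ↥(profiniteClosure Φ) ⧸ Sb Φ U ℓ) =
        QuotientGroup.mk (phiG Φ b) := by
    intro a b hab
    have hr : a⁻¹ * b ∈ adaptedStabilizer Φ (U ℓ) := QuotientGroup.leftRel_apply.mp hab
    rw [QuotientGroup.eq]
    show ((((phiG Φ a)⁻¹ * phiG Φ b : ↥(profiniteClosure Φ))) : X ≃ₜ X) '' U ℓ = U ℓ
    rw [Subgroup.coe_mul, Subgroup.coe_inv, phiG_coe, phiG_coe, ← map_inv, ← map_mul]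
    exact hr
  let f : (Γ ⧸ adaptedStabilizer Φ (U ℓ)) → (↥(profiniteClosure Φ) ⧸ Sb Φ U ℓ) :=
    fun q => Quotient.liftOn' q (fun g => QuotientGroup.mk (phiG Φ g)) hwd
  have hinj : Function.Injective f := by
    intro q1 q2
    induction q1 using Quotient.inductionOn' with | h a =>
    induction q2 using Quotient.inductionOn' with | h b =>
    intro hab
    have hab' : (QuotientGroup.mk (phiG Φ a) : ↥(profiniteClosure Φ) ⧸ Sb Φ U ℓ) =
      QuotientGroup.mk (phiG Φ b) := hab
    rw [QuotientGroup.eq] at hab'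
    have hmem : ((((phiG Φ a)⁻¹ * phiG Φ b : ↥(profiniteClosure Φ))) : X ≃ₜ X) '' U ℓ
        = U ℓ := hab'
    rw [Subgroup.coe_mul, Subgroup.coe_inv, phiG_coe, phiG_coe, ← map_inv,
      ← map_mul] at hmem
    exact Quotient.sound' (QuotientGroup.leftRel_apply.mpr hmem)
  have hsurj : Function.Surjective f := by
    intro q
    refine QuotientGroup.induction_on q ?_
    intro ga
    obtain ⟨η, hη, hgap⟩ := S.exists_gap ℓ
    obtain ⟨g₀, hg₀⟩ := exists_close ga hη
    refine ⟨QuotientGroup.mk g₀, ?_⟩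
    have h1 : (ga : X ≃ₜ X) '' U ℓ = Φ g₀ '' U ℓ := by
      have := S.perm_of_close hgap _ g₀ hg₀ 1
      rwa [S.trans_self, mul_one] at this
    show (QuotientGroup.mk (phiG Φ g₀) : ↥(profiniteClosure Φ) ⧸ Sb Φ U ℓ) =
      QuotientGroup.mk ga
    rw [QuotientGroup.eq]
    show ((((phiG Φ g₀)⁻¹ * ga : ↥(profiniteClosure Φ))) : X ≃ₜ X) '' U ℓ = U ℓ
    rw [Subgroup.coe_mul, Subgroup.coe_inv, phiG_coe, himage_mul, h1,
      ← himage_mul, inv_mul_cancel, himage_one]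
  rw [Subgroup.index_eq_card]
  exact (Nat.card_congr (Equiv.ofBijective f ⟨hinj, hsurj⟩)).symm

end CAS

end Main3
section Main4

open Filter

variable {X : Type*} [MetricSpace X] [CompactSpace X] [Nonempty X]
  {Γ : Type*} [Group Γ]

namespace CAS

variable {Φ : Γ →* (X ≃ₜ X)} {x : X} {U : ℕ → Set X} (S : CAS Φ x U)
include S

theorem hchain (g : ℕ → Γ)
    (hcomp : ∀ j, (g j)⁻¹ * g (j + 1) ∈ (adaptedStabilizer Φ (U j)).normalCore)
    (j : ℕ) : ∀ j', j ≤ j' → (g j)⁻¹ * g j' ∈ (adaptedStabilizer Φ (U j)).normalCore := by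
  intro j' hjj'
  induction j', hjj' using Nat.le_induction with
  | base => simpa using Subgroup.one_mem _
  | succ m hm ih =>
    have heq : (g j)⁻¹ * g (m + 1) = ((g j)⁻¹ * g m) * ((g m)⁻¹ * g (m + 1)) := by group
    rw [heq]
    exact mul_mem ih (S.core_mono hm (hcomp m))

theorem hsame (j : ℕ) (c : Γ) (hc : c ∈ (adaptedStabilizer Φ (U j)).normalCore) (y : X) :
    ∃ h : Γ, y ∈ Φ h '' U j ∧ Φ c y ∈ Φ h '' U j := by
  obtain ⟨h, hy⟩ := S.cover j y
  refine ⟨h, hy, ?_⟩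
  have h1 := mem_normalCore_iff.mp hc h⁻¹
  rw [inv_inv] at h1
  have h1' : Φ (h⁻¹ * c * h) '' U j = U j := h1
  have h2 : Φ c y ∈ Φ (c * h) '' U j := by
    rw [map_mul, himage_mul]; exact Set.mem_image_of_mem _ hy
  have h3 : c * h = h * (h⁻¹ * c * h) := by group
  rwa [h3, map_mul, himage_mul, h1'] at h2

theorem hkey {ε : ℝ} (hε : 0 < ε) : ∃ J : ℕ, ∀ j, J ≤ j →
    ∀ c ∈ (adaptedStabilizer Φ (U j)).normalCore, ∀ y, dist (Φ c y) y < ε := by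
  obtain ⟨ℓ₀, hℓ₀⟩ := S.small hε
  refine ⟨ℓ₀, fun j hj c hc y => ?_⟩
  obtain ⟨h, hy, hcy⟩ := S.hsame j c hc y
  exact hℓ₀ j hj h (Φ c y) hcy y hy

/-- The limit of a compatible sequence lies in the discriminant and represents
the correct cosets. -/
theorem limit (g : ℕ → Γ) (hg : ∀ j, g j ∈ adaptedStabilizer Φ (U j))
    (hcomp : ∀ j, (g j)⁻¹ * g (j + 1) ∈ (adaptedStabilizer Φ (U j)).normalCore) :
    ∃ da : ↥(profiniteClosure Φ), da ∈ discriminant Φ x ∧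
      ∀ j, psimk Φ U j (g j) = QuotientGroup.mk da := by
  classical
  let A : ℕ → C(X, X) := fun j => ⟨⇑(Φ (g j)), (Φ (g j)).continuous⟩
  let B : ℕ → C(X, X) := fun j => ⟨⇑((Φ (g j)).symm), (Φ (g j)).symm.continuous⟩
  have hAest : ∀ ε : ℝ, 0 < ε → ∃ J, ∀ j, J ≤ j → ∀ j', j ≤ j' →
      dist (A j') (A j) ≤ ε := by
    intro ε hε
    obtain ⟨δ, hδ, hδp⟩ := S.heqc ε hε
    obtain ⟨J, hJ⟩ := S.hkey hδ
    refine ⟨J, fun j hj j' hjj' => (ContinuousMap.dist_le hε.le).mpr fun y => ?_⟩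
    have hc := S.hchain g hcomp j j' hjj'
    have h1 : Φ (g j') y = Φ (g j) (Φ ((g j)⁻¹ * g j') y) := by
      rw [← Homeomorph.mul_apply, ← map_mul, mul_inv_cancel_left]
    show dist (Φ (g j') y) (Φ (g j) y) ≤ ε
    rw [h1]
    exact (hδp _ y (hJ j hj _ hc y) (g j)).le
  have hBest : ∀ ε : ℝ, 0 < ε → ∃ J, ∀ j, J ≤ j → ∀ j', j ≤ j' →
      dist (B j') (B j) ≤ ε := by
    intro ε hε
    obtain ⟨J, hJ⟩ := S.hkey hε
    refine ⟨J, fun j hj j' hjj' => (ContinuousMap.dist_le hε.le).mpr fun y => ?_⟩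
    have hc : ((g j)⁻¹ * g j')⁻¹ ∈ (adaptedStabilizer Φ (U j)).normalCore :=
      inv_mem (S.hchain g hcomp j j' hjj')
    have e1 : (Φ (g j')).symm y = Φ (((g j)⁻¹ * g j')⁻¹) ((Φ (g j)).symm y) := by
      have e0 : (g j')⁻¹ = ((g j)⁻¹ * g j')⁻¹ * (g j)⁻¹ := by group
      calc (Φ (g j')).symm y = Φ ((g j')⁻¹) y := by
            rw [map_inv, Homeomorph.inv_eq_symm]
        _ = Φ (((g j)⁻¹ * g j')⁻¹ * (g j)⁻¹) y := by rw [← e0]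
        _ = Φ (((g j)⁻¹ * g j')⁻¹) (Φ ((g j)⁻¹) y) := by
            rw [map_mul, Homeomorph.mul_apply]
        _ = Φ (((g j)⁻¹ * g j')⁻¹) ((Φ (g j)).symm y) := by
            congr 1
            rw [map_inv, Homeomorph.inv_eq_symm]
    show dist ((Φ (g j')).symm y) ((Φ (g j)).symm y) ≤ ε
    rw [e1]
    exact (hJ j hj _ hc _).le
  have hAcauchy : CauchySeq A := by
    rw [Metric.cauchySeq_iff']
    intro ε hε
    obtain ⟨J, hJ⟩ := hAest (ε / 2) (half_pos hε)
    exact ⟨J, fun n hn => lt_of_le_of_lt (hJ J le_rfl n hn) (by linarith)⟩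
  have hBcauchy : CauchySeq B := by
    rw [Metric.cauchySeq_iff']
    intro ε hε
    obtain ⟨J, hJ⟩ := hBest (ε / 2) (half_pos hε)
    exact ⟨J, fun n hn => lt_of_le_of_lt (hJ J le_rfl n hn) (by linarith)⟩
  obtain ⟨FA, hFA⟩ := cauchySeq_tendsto_of_complete hAcauchy
  obtain ⟨FB, hFB⟩ := cauchySeq_tendsto_of_complete hBcauchy
  have hFAy : ∀ y, Tendsto (fun j => A j y) atTop (𝓝 (FA y)) := fun y =>
    ((continuous_eval_const y).tendsto FA).comp hFA
  have hFBy : ∀ y, Tendsto (fun j => B j y) atTop (𝓝 (FB y)) := fun y =>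
    ((continuous_eval_const y).tendsto FB).comp hFB
  have hcompose : ∀ (F G : C(X,X)) (Aj Bj : ℕ → C(X,X)),
      Tendsto Aj atTop (𝓝 F) → (∀ y, Tendsto (fun j => Bj j y) atTop (𝓝 (G y))) →
      (∀ j y, Aj j (Bj j y) = y) → ∀ y, F (G y) = y := by
    intro F G Aj Bj hA hB hid y
    have t1 : Tendsto (fun j => Aj j (Bj j y)) atTop (𝓝 (F (G y))) := by
      rw [tendsto_iff_dist_tendsto_zero]
      have hb : ∀ j, dist (Aj j (Bj j y)) (F (G y)) ≤
          dist (Aj j) F + dist (F (Bj j y)) (F (G y)) := by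
        intro j
        calc dist (Aj j (Bj j y)) (F (G y))
            ≤ dist (Aj j (Bj j y)) (F (Bj j y)) + dist (F (Bj j y)) (F (G y)) :=
              dist_triangle _ _ _
          _ ≤ dist (Aj j) F + dist (F (Bj j y)) (F (G y)) :=
              add_le_add_left (ContinuousMap.dist_apply_le_dist _) _
      refine squeeze_zero (fun j => dist_nonneg) hb ?_
      have l1 : Tendsto (fun j => dist (Aj j) F) atTop (𝓝 0) :=
        tendsto_iff_dist_tendsto_zero.mp hA
      have l2 : Tendsto (fun j => dist (F (Bj j y)) (F (G y))) atTop (𝓝 0) := by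
        apply tendsto_iff_dist_tendsto_zero.mp
        exact (F.continuous.tendsto (G y)).comp (hB y)
      simpa using l1.add l2
    have t2 : Tendsto (fun j => Aj j (Bj j y)) atTop (𝓝 y) := by
      simp only [hid]
      exact tendsto_const_nhds
    exact tendsto_nhds_unique t1 t2
  have hid1 : ∀ y, FA (FB y) = y :=
    hcompose FA FB A B hFA hFBy (fun j y => (Φ (g j)).apply_symm_apply y)
  have hid2 : ∀ y, FB (FA y) = y :=
    hcompose FB FA B A hFB hFAy (fun j y => (Φ (g j)).symm_apply_apply y)
  let d0 : X ≃ₜ X :=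
    { toFun := ⇑FA
      invFun := ⇑FB
      left_inv := hid2
      right_inv := hid1
      continuous_toFun := FA.continuous
      continuous_invFun := FB.continuous }
  have hd0 : (⟨⇑d0, d0.continuous⟩ : C(X,X)) = FA := ContinuousMap.ext fun y => rfl
  have hdist : ∀ j, dist (Φ (g j)) d0 = dist (A j) FA := by
    intro j
    rw [Homeomorph.dist_eq_contMap]
    exact congrArg (dist (A j)) hd0
  have htend : Tendsto (fun j => Φ (g j)) atTop (𝓝 d0) := by
    rw [tendsto_iff_dist_tendsto_zero]
    simp only [hdist]
    exact tendsto_iff_dist_tendsto_zero.mp hFA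
  have hmem : d0 ∈ profiniteClosure Φ := by
    have hcl : d0 ∈ closure (Φ.range : Set (X ≃ₜ X)) :=
      mem_closure_of_tendsto htend (Eventually.of_forall fun j => ⟨g j, rfl⟩)
    have h2 : (profiniteClosure Φ : Set (X ≃ₜ X)) = closure (Φ.range : Set (X ≃ₜ X)) := by
      unfold profiniteClosure
      exact Subgroup.topologicalClosure_coe
    rw [← SetLike.mem_coe, h2]
    exact hcl
  refine ⟨⟨d0, hmem⟩, ?_, ?_⟩
  · refine mem_discriminant_iff.mpr ?_
    show FA x = x
    have t1 : Tendsto (fun j => A j x) atTop (𝓝 (FA x)) := hFAy x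
    have t2 : Tendsto (fun j => A j x) atTop (𝓝 x) := by
      refine Metric.tendsto_atTop.mpr fun ε hε => ?_
      obtain ⟨ℓ₀, hℓ₀⟩ := S.small hε
      refine ⟨ℓ₀, fun j hj => ?_⟩
      have hgi : Φ (g j) '' U j = U j := hg j
      have hx1 : Φ (g j) x ∈ Φ (1 : Γ) '' U j := by
        rw [S.trans_self, ← hgi]
        exact Set.mem_image_of_mem _ (S.hx j)
      exact hℓ₀ j hj 1 _ hx1 x (by rw [S.trans_self]; exact S.hx j)
    exact tendsto_nhds_unique t1 t2
  · intro j
    obtain ⟨η, hη, hgap⟩ := S.exists_gap j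
    obtain ⟨ℓ₀, hℓ₀⟩ := S.small (half_pos hη)
    set j' := max j ℓ₀ with hj'
    have hdd : ∀ y, dist (d0 y) (Φ (g j') y) < η := by
      intro y
      have hb : ∀ k, j' ≤ k → dist (A k y) (A j' y) ≤ η / 2 := by
        intro k hk
        have hc := S.hchain g hcomp j' k hk
        have h1 : Φ (g k) y = Φ (g j') (Φ ((g j')⁻¹ * g k) y) := by
          rw [← Homeomorph.mul_apply, ← map_mul, mul_inv_cancel_left]
        show dist (Φ (g k) y) (Φ (g j') y) ≤ η / 2
        rw [h1]
        obtain ⟨h, hy1, hy2⟩ := S.hsame j' _ hc y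
        have m1 : Φ (g j') (Φ ((g j')⁻¹ * g k) y) ∈ Φ (g j' * h) '' U j' := by
          rw [map_mul, himage_mul]; exact Set.mem_image_of_mem _ hy2
        have m2 : Φ (g j') y ∈ Φ (g j' * h) '' U j' := by
          rw [map_mul, himage_mul]; exact Set.mem_image_of_mem _ hy1
        exact (hℓ₀ j' (le_max_right _ _) _ _ m1 _ m2).le
      have hlim : Tendsto (fun k => dist (A k y) (A j' y)) atTop
          (𝓝 (dist (FA y) (A j' y))) :=
        (hFAy y).dist tendsto_const_nhds
      have hle : dist (FA y) (A j' y) ≤ η / 2 :=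
        le_of_tendsto hlim (eventually_atTop.mpr ⟨j', hb⟩)
      calc dist (d0 y) (Φ (g j') y) = dist (FA y) (A j' y) := rfl
        _ ≤ η / 2 := hle
        _ < η := by linarith
    have hrep : psimk Φ U j (g j') =
        QuotientGroup.mk (⟨d0, hmem⟩ : ↥(profiniteClosure Φ)) :=
      S.rep_of_close hgap _ (g j') fun y => hdd y
    have heqq : psimk Φ U j (g j) = psimk Φ U j (g j') :=
      (S.psimk_eq_iff).mpr (S.hchain g hcomp j j' (le_max_left _ _))
    rw [heqq, hrep]

end CAS

end Main4
section Main5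

variable {X : Type*} [MetricSpace X] [CompactSpace X] [Nonempty X]
  {Γ : Type*} [Group Γ]

namespace CAS

variable {Φ : Γ →* (X ≃ₜ X)} {x : X} {U : ℕ → Set X} (S : CAS Φ x U)
include S

theorem mem_Sb_rep (m : ℕ) (ga : ↥(profiniteClosure Φ)) (hga : ga ∈ Sb Φ U m) :
    ∃ g₀ ∈ adaptedStabilizer Φ (U m), psimk Φ U m g₀ = QuotientGroup.mk ga := by
  obtain ⟨η, hη, hgap⟩ := S.exists_gap m
  obtain ⟨g₀, hg₀⟩ := exists_close ga hη
  have h1 : (ga : X ≃ₜ X) '' U m = Φ g₀ '' U m := by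
    have := S.perm_of_close hgap _ g₀ hg₀ 1
    rwa [S.trans_self, mul_one] at this
  refine ⟨g₀, ?_, S.rep_of_close hgap ga g₀ hg₀⟩
  show Φ g₀ '' U m = U m
  rw [← h1]; exact hga

/-- The images of the `Γ_m` in the finite quotient `Γ/C_j` stabilize. -/
theorem stab_point (j : ℕ) : ∃ M : ℕ, j ≤ M ∧ ∀ m, M ≤ m →
    ∀ h₀ ∈ adaptedStabilizer Φ (U M), ∃ h ∈ adaptedStabilizer Φ (U m),
      h₀⁻¹ * h ∈ (adaptedStabilizer Φ (U j)).normalCore := by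
  classical
  haveI := S.finite_quot_core j
  set C := (adaptedStabilizer Φ (U j)).normalCore with hC
  let Q : ℕ → Set (Γ ⧸ C) := fun m =>
    QuotientGroup.mk '' (adaptedStabilizer Φ (U m) : Set Γ)
  have hQmono : ∀ {m m' : ℕ}, m ≤ m' → Q m' ⊆ Q m := fun {m m'} h =>
    Set.image_mono (S.gamma_mono h)
  let f : ℕ → ℕ := fun k => (Q (j + k)).ncard
  have hmem : sInf (Set.range f) ∈ Set.range f := Nat.sInf_mem ⟨f 0, 0, rfl⟩
  obtain ⟨k₀, hk₀⟩ := hmem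
  have hmin : ∀ k, f k₀ ≤ f k := fun k => hk₀ ▸ Nat.sInf_le ⟨k, rfl⟩
  refine ⟨j + k₀, Nat.le_add_right _ _, ?_⟩
  intro m hm h₀ h₀M
  have hQeq : Q m = Q (j + k₀) := by
    refine Set.eq_of_subset_of_ncard_le (hQmono hm) ?_ (Set.toFinite _)
    have hm' : m = j + (k₀ + (m - (j + k₀))) := by omega
    rw [hm']
    exact hmin _
  have hmk : (QuotientGroup.mk h₀ : Γ ⧸ C) ∈ Q m := by
    rw [hQeq]
    exact ⟨h₀, h₀M, rfl⟩
  obtain ⟨h, hh, hmk2⟩ := hmk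
  refine ⟨h, hh, ?_⟩
  have h3 : h⁻¹ * h₀ ∈ C := QuotientGroup.eq.mp hmk2
  have h4 : h₀⁻¹ * h = (h⁻¹ * h₀)⁻¹ := by group
  rw [h4]
  exact inv_mem h3

/-- The Mittag-Leffler construction of a compatible sequence through a given coset. -/
theorem ml (ℓ : ℕ) (a : Γ)
    (ha : ∀ m, ∃ h ∈ adaptedStabilizer Φ (U m),
      a⁻¹ * h ∈ (adaptedStabilizer Φ (U ℓ)).normalCore) :
    ∃ g : ℕ → Γ, (∀ j, g j ∈ adaptedStabilizer Φ (U j)) ∧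
      (∀ j, (g j)⁻¹ * g (j + 1) ∈ (adaptedStabilizer Φ (U j)).normalCore) ∧
      a⁻¹ * g ℓ ∈ (adaptedStabilizer Φ (U ℓ)).normalCore := by
  classical
  let Inv : ℕ → Γ → Prop := fun j b => b ∈ adaptedStabilizer Φ (U j) ∧
    ∀ m, ∃ h ∈ adaptedStabilizer Φ (U m),
      b⁻¹ * h ∈ (adaptedStabilizer Φ (U j)).normalCore
  have base : ∃ b, Inv ℓ b ∧ a⁻¹ * b ∈ (adaptedStabilizer Φ (U ℓ)).normalCore := by
    obtain ⟨M, hMj, hM⟩ := S.stab_point ℓ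
    obtain ⟨h₀, h₀M, h₀a⟩ := ha M
    refine ⟨h₀, ⟨S.gamma_mono hMj h₀M, fun m => ?_⟩, h₀a⟩
    rcases le_total m M with hmM | hMm
    · exact ⟨h₀, S.gamma_mono hmM h₀M, by simpa using Subgroup.one_mem _⟩
    · exact hM m hMm h₀ h₀M
  have step : ∀ j b, Inv j b → ∃ b', Inv (j + 1) b' ∧
      b⁻¹ * b' ∈ (adaptedStabilizer Φ (U j)).normalCore := by
    intro j b hb
    obtain ⟨M, hMj, hM⟩ := S.stab_point (j + 1)
    obtain ⟨h₀, h₀M, h₀b⟩ := hb.2 M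
    refine ⟨h₀, ⟨S.gamma_mono hMj h₀M, fun m => ?_⟩, h₀b⟩
    rcases le_total m M with hmM | hMm
    · exact ⟨h₀, S.gamma_mono hmM h₀M, by simpa using Subgroup.one_mem _⟩
    · exact hM m hMm h₀ h₀M
  choose fstep hf1 hf2 using step
  obtain ⟨b₀, hb₀, hb₀a⟩ := base
  let s : (k : ℕ) → {b : Γ // Inv (ℓ + k) b} := fun k =>
    Nat.rec ⟨b₀, hb₀⟩ (fun k p => ⟨fstep (ℓ + k) p.1 p.2, hf1 (ℓ + k) p.1 p.2⟩) k
  have hsucc : ∀ k, (s (k + 1)).1 = fstep (ℓ + k) (s k).1 (s k).2 := fun k => rfl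
  have hscomp : ∀ k, ((s k).1)⁻¹ * (s (k + 1)).1 ∈
      (adaptedStabilizer Φ (U (ℓ + k))).normalCore := by
    intro k
    rw [hsucc k]
    exact hf2 (ℓ + k) (s k).1 (s k).2
  let g : ℕ → Γ := fun j => if h : j ≤ ℓ then b₀ else (s (j - ℓ)).1
  have hg0 : g ℓ = b₀ := by simp only [g, dif_pos le_rfl]
  have hgmem : ∀ j, g j ∈ adaptedStabilizer Φ (U j) := by
    intro j
    by_cases h : j ≤ ℓ
    · simp only [g, dif_pos h]
      exact S.gamma_mono h hb₀.1
    · simp only [g, dif_neg h]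
      have hj : ℓ + (j - ℓ) = j := by omega
      have hmem := (s (j - ℓ)).2.1
      have hsg : adaptedStabilizer Φ (U (ℓ + (j - ℓ))) = adaptedStabilizer Φ (U j) := by
        rw [hj]
      exact hsg ▸ hmem
  have hgcomp : ∀ j, (g j)⁻¹ * g (j + 1) ∈ (adaptedStabilizer Φ (U j)).normalCore := by
    intro j
    by_cases h1 : j + 1 ≤ ℓ
    · have h0 : j ≤ ℓ := by omega
      simp only [g, dif_pos h1, dif_pos h0]
      simpa using Subgroup.one_mem _
    · by_cases h0 : j ≤ ℓ
      · have hjeq : j = ℓ := by omega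
        subst hjeq
        simp only [g, dif_neg h1, dif_pos h0]
        have e1 : j + 1 - j = 1 := by omega
        rw [e1]
        have hcc := hscomp 0
        have hsg : (adaptedStabilizer Φ (U (j + 0))).normalCore
            = (adaptedStabilizer Φ (U j)).normalCore := by norm_num
        exact hsg ▸ hcc
      · simp only [g, dif_neg h1, dif_neg h0]
        have e1 : j + 1 - ℓ = (j - ℓ) + 1 := by omega
        rw [e1]
        have hcc := hscomp (j - ℓ)
        have e2 : ℓ + (j - ℓ) = j := by omega
        have hsg : (adaptedStabilizer Φ (U (ℓ + (j - ℓ)))).normalCore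
            = (adaptedStabilizer Φ (U j)).normalCore := by rw [e2]
        exact hsg ▸ hcc
  refine ⟨g, hgmem, hgcomp, ?_⟩
  rw [hg0]
  exact hb₀a

theorem exists_Sb_le (ℓ : ℕ) : ∃ m : ℕ, Sb Φ U m ≤ NN Φ U ℓ ⊔ discriminant Φ x := by
  obtain ⟨M, hMℓ, hM⟩ := S.stab_point ℓ
  refine ⟨M, fun ga hga => ?_⟩
  obtain ⟨g₀, hg₀M, hg₀psi⟩ := S.mem_Sb_rep M ga hga
  have ha : ∀ m, ∃ h ∈ adaptedStabilizer Φ (U m),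
      g₀⁻¹ * h ∈ (adaptedStabilizer Φ (U ℓ)).normalCore := by
    intro m
    rcases le_total m M with hmM | hMm
    · exact ⟨g₀, S.gamma_mono hmM hg₀M, by simpa using Subgroup.one_mem _⟩
    · exact hM m hMm g₀ hg₀M
  obtain ⟨g, hgmem, hgcomp, hgℓ⟩ := S.ml ℓ g₀ ha
  obtain ⟨da, hda, hdapsi⟩ := S.limit g hgmem hgcomp
  have h1 : psimk Φ U ℓ g₀ = QuotientGroup.mk ga := by
    have h2 := hg₀psi
    rw [psimk, QuotientGroup.eq] at h2
    rw [psimk, QuotientGroup.eq]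
    exact S.N_mono hMℓ h2
  have h3 : psimk Φ U ℓ g₀ = QuotientGroup.mk da := by
    rw [S.psimk_eq_iff.mpr hgℓ]
    exact hdapsi ℓ
  have h4 : (QuotientGroup.mk da : ↥(profiniteClosure Φ) ⧸ NN Φ U ℓ) =
      QuotientGroup.mk ga := h3.symm.trans h1
  have h5 : da⁻¹ * ga ∈ NN Φ U ℓ := QuotientGroup.eq.mp h4
  have h6 : ga = da * (da⁻¹ * ga) := by group
  rw [h6]
  have hDle : discriminant Φ x ≤ NN Φ U ℓ ⊔ discriminant Φ x := le_sup_right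
  have hNle : NN Φ U ℓ ≤ NN Φ U ℓ ⊔ discriminant Φ x := le_sup_left
  exact mul_mem (hDle hda) (hNle h5)

end CAS

end Main5
section Main6

variable {X : Type*} [MetricSpace X] [CompactSpace X] [Nonempty X]
  {Γ : Type*} [Group Γ]

namespace CAS

variable {Φ : Γ →* (X ≃ₜ X)} {x : X} {U : ℕ → Set X} (S : CAS Φ x U)
include S

theorem card_disc (ℓ : ℕ)
    (hle : ∀ j, adaptedStabilizer Φ (U (j + 1)) ≤ adaptedStabilizer Φ (U j)) :
    Nat.card ↥((chainDinf (fun j => adaptedStabilizer Φ (U j)) hle).map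
        (Pi.evalMonoidHom (chainQuot fun j => adaptedStabilizer Φ (U j)) ℓ)) =
      Nat.card (↥(discriminant Φ x) ⧸
        ((NN Φ U ℓ).subgroupOf (discriminant Φ x))) := by
  classical
  set Γs : ℕ → Subgroup Γ := fun j => adaptedStabilizer Φ (U j) with hΓs
  -- the comparison map Θ : Γ_ℓ/C_ℓ → G/N_ℓ
  have hwd : ∀ (w1 w2 : ↥(Γs ℓ)),
      (QuotientGroup.leftRel ((Γs ℓ).normalCore.subgroupOf (Γs ℓ))).r w1 w2 →
      psimk Φ U ℓ (w1 : Γ) = psimk Φ U ℓ (w2 : Γ) := by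
    intro w1 w2 hab
    have h1 : w1⁻¹ * w2 ∈ (Γs ℓ).normalCore.subgroupOf (Γs ℓ) :=
      QuotientGroup.leftRel_apply.mp hab
    have h2 : ((w1⁻¹ * w2 : ↥(Γs ℓ)) : Γ) ∈ (Γs ℓ).normalCore :=
      Subgroup.mem_subgroupOf.mp h1
    rw [Subgroup.coe_mul, Subgroup.coe_inv] at h2
    exact S.psimk_eq_iff.mpr h2
  let Th : chainQuot Γs ℓ → (↥(profiniteClosure Φ) ⧸ NN Φ U ℓ) :=
    fun q => Quotient.liftOn' q (fun w : ↥(Γs ℓ) => psimk Φ U ℓ (w : Γ)) hwd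
  have hTinj : Function.Injective Th := by
    intro q1 q2
    induction q1 using Quotient.inductionOn' with | h w1 =>
    induction q2 using Quotient.inductionOn' with | h w2 =>
    intro hq
    have hq' : psimk Φ U ℓ (w1 : Γ) = psimk Φ U ℓ (w2 : Γ) := hq
    have h2 : (w1 : Γ)⁻¹ * (w2 : Γ) ∈ (Γs ℓ).normalCore := S.psimk_eq_iff.mp hq'
    apply Quotient.sound'
    rw [QuotientGroup.leftRel_apply]
    refine Subgroup.mem_subgroupOf.mpr ?_
    rw [Subgroup.coe_mul, Subgroup.coe_inv]
    exact h2
  set A : Set (chainQuot Γs ℓ) :=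
    ((chainDinf Γs hle).map (Pi.evalMonoidHom (chainQuot Γs) ℓ) : Set (chainQuot Γs ℓ))
    with hA
  set B : Set (↥(profiniteClosure Φ) ⧸ NN Φ U ℓ) :=
    (fun da : ↥(profiniteClosure Φ) => (QuotientGroup.mk da :
      ↥(profiniteClosure Φ) ⧸ NN Φ U ℓ)) '' (discriminant Φ x : Set _) with hB
  have hTAB : Th '' A = B := by
    apply Set.eq_of_subset_of_subset
    · rintro _ ⟨a, ha, rfl⟩
      obtain ⟨z, hz, rfl⟩ := Subgroup.mem_map.mp ha
      -- lift z to a compatible sequence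
      have hrep : ∀ j, ∃ w : ↥(Γs j), QuotientGroup.mk w = z j := fun j =>
        Quotient.exists_rep (z j)
      choose w hw using hrep
      have hcompat : ∀ j, ((w j : Γ))⁻¹ * (w (j + 1) : Γ) ∈ (Γs j).normalCore := by
        intro j
        have hbz : chainBond Γs hle j (z (j + 1)) = z j := hz j
        rw [← hw (j + 1), ← hw j] at hbz
        have hbz2 : (QuotientGroup.mk (Subgroup.inclusion (hle j) (w (j + 1))) :
            chainQuot Γs j) = QuotientGroup.mk (w j) := by
          rw [← hbz]
          rfl
        have h3 := QuotientGroup.eq.mp hbz2.symm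
        have h4 : ((w j)⁻¹ * Subgroup.inclusion (hle j) (w (j + 1)) : ↥(Γs j)) ∈
            (Γs j).normalCore.subgroupOf (Γs j) := h3
        have h5 := Subgroup.mem_subgroupOf.mp h4
        rwa [Subgroup.coe_mul, Subgroup.coe_inv, Subgroup.coe_inclusion] at h5
      obtain ⟨da, hda, hdapsi⟩ := S.limit (fun j => (w j : Γ)) (fun j => (w j).2) hcompat
      refine ⟨da, hda, ?_⟩
      have hTz : Th ((Pi.evalMonoidHom (chainQuot Γs) ℓ) z) = psimk Φ U ℓ ((w ℓ : Γ)) := by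
        show Th (z ℓ) = _
        rw [← hw ℓ]
        rfl
      rw [hTz, hdapsi ℓ]
    · rintro _ ⟨da, hda, rfl⟩
      have hrep : ∀ j, ∃ g₀ ∈ adaptedStabilizer Φ (U j),
          psimk Φ U j g₀ = QuotientGroup.mk da := fun j =>
        S.mem_Sb_rep j da (S.D_le_Sb j hda)
      choose g hgmem hgpsi using hrep
      have hcompat : ∀ j, (g j)⁻¹ * g (j + 1) ∈ (Γs j).normalCore := by
        intro j
        refine S.psimk_eq_iff.mp ?_
        have h2 := hgpsi (j + 1)
        rw [psimk, QuotientGroup.eq] at h2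
        have h3 : psimk Φ U j (g (j + 1)) = QuotientGroup.mk da := by
          rw [psimk, QuotientGroup.eq]
          exact S.N_mono (Nat.le_succ j) h2
        rw [hgpsi j, h3]
      let z : ∀ j, chainQuot Γs j := fun j =>
        (QuotientGroup.mk (⟨g j, hgmem j⟩ : ↥(Γs j)) : chainQuot Γs j)
      have hzmem : z ∈ chainDinf Γs hle := by
        intro j
        show chainBond Γs hle j (z (j + 1)) = z j
        have hb1 : chainBond Γs hle j (z (j + 1)) =
            QuotientGroup.mk (Subgroup.inclusion (hle j) ⟨g (j + 1), hgmem (j + 1)⟩) := rfl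
        rw [hb1]
        show _ = QuotientGroup.mk (⟨g j, hgmem j⟩ : ↥(Γs j))
        rw [QuotientGroup.eq]
        refine Subgroup.mem_subgroupOf.mpr ?_
        rw [Subgroup.coe_mul, Subgroup.coe_inv, Subgroup.coe_inclusion]
        show (g (j + 1))⁻¹ * g j ∈ _
        have h6 : (g (j + 1))⁻¹ * g j = ((g j)⁻¹ * g (j + 1))⁻¹ := by group
        rw [h6]
        exact inv_mem (hcompat j)
      refine ⟨(Pi.evalMonoidHom (chainQuot Γs) ℓ) z,
        Subgroup.mem_map.mpr ⟨z, hzmem, rfl⟩, ?_⟩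
      show psimk Φ U ℓ (g ℓ) = _
      exact hgpsi ℓ
  -- the map D/(N ∩ D) → G/N
  have hwd2 : ∀ (d1 d2 : ↥(discriminant Φ x)),
      (QuotientGroup.leftRel ((NN Φ U ℓ).subgroupOf (discriminant Φ x))).r d1 d2 →
      (QuotientGroup.mk (d1 : ↥(profiniteClosure Φ)) :
        ↥(profiniteClosure Φ) ⧸ NN Φ U ℓ) = QuotientGroup.mk (d2 : ↥(profiniteClosure Φ)) := by
    intro d1 d2 hab
    have h1 : d1⁻¹ * d2 ∈ (NN Φ U ℓ).subgroupOf (discriminant Φ x) :=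
      QuotientGroup.leftRel_apply.mp hab
    have h2 := Subgroup.mem_subgroupOf.mp h1
    rw [QuotientGroup.eq]
    rwa [Subgroup.coe_mul, Subgroup.coe_inv] at h2
  let F : (↥(discriminant Φ x) ⧸ ((NN Φ U ℓ).subgroupOf (discriminant Φ x))) →
      (↥(profiniteClosure Φ) ⧸ NN Φ U ℓ) :=
    fun q => Quotient.liftOn' q
      (fun d : ↥(discriminant Φ x) => (QuotientGroup.mk (d : ↥(profiniteClosure Φ)) :
        ↥(profiniteClosure Φ) ⧸ NN Φ U ℓ)) hwd2
  have hFinj : Function.Injective F := by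
    intro q1 q2
    induction q1 using Quotient.inductionOn' with | h d1 =>
    induction q2 using Quotient.inductionOn' with | h d2 =>
    intro hq
    have hq' : (QuotientGroup.mk (d1 : ↥(profiniteClosure Φ)) :
        ↥(profiniteClosure Φ) ⧸ NN Φ U ℓ) = QuotientGroup.mk (d2 : ↥(profiniteClosure Φ)) := hq
    have h2 := QuotientGroup.eq.mp hq'
    apply Quotient.sound'
    rw [QuotientGroup.leftRel_apply]
    refine Subgroup.mem_subgroupOf.mpr ?_
    rwa [Subgroup.coe_mul, Subgroup.coe_inv]
  have hFmem : ∀ q, F q ∈ B := by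
    intro q
    induction q using Quotient.inductionOn' with | h d =>
    exact ⟨(d : ↥(profiniteClosure Φ)), d.2, rfl⟩
  have hFsurj : ∀ b ∈ B, ∃ q, F q = b := by
    rintro _ ⟨da, hda, rfl⟩
    exact ⟨QuotientGroup.mk (⟨da, hda⟩ : ↥(discriminant Φ x)), rfl⟩
  -- assemble the cardinalities
  have e1 : Nat.card ↥((chainDinf Γs hle).map (Pi.evalMonoidHom (chainQuot Γs) ℓ)) =
      A.ncard := Nat.card_coe_set_eq _
  have e2 : A.ncard = (Th '' A).ncard := (Set.ncard_image_of_injective A hTinj).symm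
  have e3 : (Th '' A).ncard = B.ncard := by rw [hTAB]
  have e4 : Nat.card (↥(discriminant Φ x) ⧸
      ((NN Φ U ℓ).subgroupOf (discriminant Φ x))) = B.ncard := by
    have hbij : Function.Bijective (fun q => (⟨F q, hFmem q⟩ : ↥B)) := by
      constructor
      · intro a b hab
        exact hFinj (congrArg Subtype.val hab)
      · rintro ⟨b, hb⟩
        obtain ⟨q, hq⟩ := hFsurj b hb
        exact ⟨q, Subtype.ext hq⟩
    rw [Nat.card_congr (Equiv.ofBijective _ hbij), Nat.card_coe_set_eq]
  rw [e1, e2, e3, e4]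

end CAS

end Main6
section Main7

variable {X : Type*} [MetricSpace X] [CompactSpace X] [Nonempty X]
  {Γ : Type*} [Group Γ]

namespace CAS

variable {Φ : Γ →* (X ≃ₜ X)} {x : X} {U : ℕ → Set X} (S : CAS Φ x U)
include S

theorem cofinal (N : Subgroup ↥(profiniteClosure Φ))
    (hopen : IsOpen (N : Set ↥(profiniteClosure Φ))) : ∃ ℓ, NN Φ U ℓ ≤ N := by
  obtain ⟨δ, hδ, hball⟩ := Metric.isOpen_iff.mp hopen 1 N.one_mem
  obtain ⟨ℓ₀, hsmall⟩ := S.small (half_pos hδ)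
  refine ⟨ℓ₀, fun n hn => ?_⟩
  apply hball
  rw [Metric.mem_ball, Subtype.dist_eq]
  rw [Homeomorph.dist_lt_iff' _ _ hδ]
  intro y
  obtain ⟨h, hy⟩ := S.cover ℓ₀ y
  have hny : (n : X ≃ₜ X) y ∈ Φ h '' U ℓ₀ := by
    rw [← mem_NN_iff.mp hn h]
    exact Set.mem_image_of_mem _ hy
  have hd := hsmall ℓ₀ le_rfl h _ hny y hy
  calc dist ((n : X ≃ₜ X) y) (((1 : ↥(profiniteClosure Φ)) : X ≃ₜ X) y)
      = dist ((n : X ≃ₜ X) y) y := by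
        rw [OneMemClass.coe_one, Homeomorph.one_apply]
    _ < δ / 2 := hd
    _ < δ := by linarith

theorem disc_quot_ne_zero (ℓ : ℕ) :
    Nat.card (↥(discriminant Φ x) ⧸
      ((NN Φ U ℓ).subgroupOf (discriminant Φ x))) ≠ 0 := by
  haveI := S.finite_quotN ℓ
  have hwd2 : ∀ (d1 d2 : ↥(discriminant Φ x)),
      (QuotientGroup.leftRel ((NN Φ U ℓ).subgroupOf (discriminant Φ x))).r d1 d2 →
      (QuotientGroup.mk (d1 : ↥(profiniteClosure Φ)) :
        ↥(profiniteClosure Φ) ⧸ NN Φ U ℓ) =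
        QuotientGroup.mk (d2 : ↥(profiniteClosure Φ)) := by
    intro d1 d2 hab
    have h1 : d1⁻¹ * d2 ∈ (NN Φ U ℓ).subgroupOf (discriminant Φ x) :=
      QuotientGroup.leftRel_apply.mp hab
    have h2 := Subgroup.mem_subgroupOf.mp h1
    rw [QuotientGroup.eq]
    rwa [Subgroup.coe_mul, Subgroup.coe_inv] at h2
  let F : (↥(discriminant Φ x) ⧸ ((NN Φ U ℓ).subgroupOf (discriminant Φ x))) →
      (↥(profiniteClosure Φ) ⧸ NN Φ U ℓ) :=
    fun q => Quotient.liftOn' q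
      (fun d : ↥(discriminant Φ x) => (QuotientGroup.mk (d : ↥(profiniteClosure Φ)) :
        ↥(profiniteClosure Φ) ⧸ NN Φ U ℓ)) hwd2
  have hFinj : Function.Injective F := by
    intro q1 q2
    induction q1 using Quotient.inductionOn' with | h d1 =>
    induction q2 using Quotient.inductionOn' with | h d2 =>
    intro hq
    have hq' : (QuotientGroup.mk (d1 : ↥(profiniteClosure Φ)) :
        ↥(profiniteClosure Φ) ⧸ NN Φ U ℓ) =
        QuotientGroup.mk (d2 : ↥(profiniteClosure Φ)) := hq
    have h2 := QuotientGroup.eq.mp hq'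
    apply Quotient.sound'
    rw [QuotientGroup.leftRel_apply]
    refine Subgroup.mem_subgroupOf.mpr ?_
    rwa [Subgroup.coe_mul, Subgroup.coe_inv]
  haveI hfin : Finite (↥(discriminant Φ x) ⧸
      ((NN Φ U ℓ).subgroupOf (discriminant Φ x))) := Finite.of_injective F hFinj
  exact Nat.card_ne_zero.mpr ⟨inferInstance, hfin⟩

end CAS

end Main7

/-- Computation of the three Steinitz orders of a minimal
equicontinuous Cantor action from the group chain of stabilizers of an adapted
neighborhood basis at `x`:
`Π[G(Φ)] = LCM{[Γ : C_ℓ]}`, `Π[G(Φ):D(Φ,x)] = LCM{[Γ : Γ_ℓ]}`, and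
`Π[D(Φ,x)] = LCM{k*_ℓ}` where `k*_ℓ` is the cardinality of the image of the projection
`D_∞ → Γ_ℓ/C_ℓ`. -/
theorem steinitzOrders_eq_of_groupChain
    {X : Type*} [MetricSpace X] [CompactSpace X] [Nonempty X] [TotallyDisconnectedSpace X]
    (hperf : Perfect (Set.univ : Set X))
    {Γ : Type*} [Group Γ] [Countable Γ] (Φ : Γ →* (X ≃ₜ X))
    (hmin : IsMinimalAction Φ) (heqc : IsEquicontinuousAction Φ)
    (x : X) (U : ℕ → Set X)
    (hadapt : ∀ ℓ, IsAdaptedSet Φ (U ℓ)) (hx : ∀ ℓ, x ∈ U ℓ)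
    (hproper : ∀ ℓ, U (ℓ + 1) ⊂ U ℓ) (hinter : (⋂ ℓ, U ℓ) = {x}) :
    steinitzOrderAction Φ =
        SteinitzNum.lcmSet
          (Set.range fun ℓ => ((adaptedStabilizer Φ (U ℓ)).normalCore).index) ∧
      steinitzOrderRel Φ x =
        SteinitzNum.lcmSet (Set.range fun ℓ => (adaptedStabilizer Φ (U ℓ)).index) ∧
      steinitzOrderDisc Φ x =
        SteinitzNum.lcmSet (Set.range fun ℓ =>
          Nat.card
            ↥((chainDinf (fun j => adaptedStabilizer Φ (U j))
                (fun j => adaptedStabilizer_mono Φ (hproper j).subset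
                  (hadapt j) (hadapt (j + 1)))).map
              (Pi.evalMonoidHom (chainQuot fun j => adaptedStabilizer Φ (U j)) ℓ))) := by
  classical
  have S : CAS Φ x U := ⟨hmin, heqc, hadapt, hx, fun ℓ => (hproper ℓ).subset, hinter⟩
  refine ⟨?_, ?_, ?_⟩
  · -- Π[G(Φ)] = LCM [Γ : C_ℓ]
    unfold steinitzOrderAction steinitzOrder
    refine SteinitzNum.lcmSet_eq_of_dvd ?_ ?_
    · rintro n ⟨N, hNnorm, hNopen, rfl⟩
      obtain ⟨ℓ, hℓ⟩ := S.cofinal N hNopen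
      refine ⟨((adaptedStabilizer Φ (U ℓ)).normalCore).index, ⟨ℓ, rfl⟩, ?_,
        S.coreIndex_ne_zero ℓ⟩
      rw [← Subgroup.index_eq_card, ← S.card_quotN ℓ, ← Subgroup.index_eq_card]
      exact Subgroup.index_dvd_of_le hℓ
    · rintro m ⟨ℓ, rfl⟩
      refine ⟨Nat.card (↥(profiniteClosure Φ) ⧸ NN Φ U ℓ),
        ⟨NN Φ U ℓ, S.N_normal ℓ, S.N_isOpen ℓ, rfl⟩, ?_, ?_⟩
      · rw [S.card_quotN ℓ]
      · rw [S.card_quotN ℓ]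
        exact S.coreIndex_ne_zero ℓ
  · -- Π[G(Φ) : D(Φ,x)] = LCM [Γ : Γ_ℓ]
    unfold steinitzOrderRel steinitzRelativeOrder
    refine SteinitzNum.lcmSet_eq_of_dvd ?_ ?_
    · rintro n ⟨N, hNnorm, hNopen, rfl⟩
      obtain ⟨ℓ, hℓ⟩ := S.cofinal N hNopen
      obtain ⟨m, hm⟩ := S.exists_Sb_le ℓ
      have hle2 : Sb Φ U m ≤ N ⊔ discriminant Φ x :=
        hm.trans (sup_le_sup_right hℓ _)
      refine ⟨(adaptedStabilizer Φ (U m)).index, ⟨m, rfl⟩, ?_, S.gammaIndex_ne_zero m⟩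
      rw [← Subgroup.index_eq_card, ← S.card_quotSb m, ← Subgroup.index_eq_card]
      exact Subgroup.index_dvd_of_le hle2
    · rintro m ⟨ℓ, rfl⟩
      refine ⟨Nat.card (↥(profiniteClosure Φ) ⧸ (NN Φ U ℓ ⊔ discriminant Φ x)),
        ⟨NN Φ U ℓ, S.N_normal ℓ, S.N_isOpen ℓ, rfl⟩, ?_, ?_⟩
      · have hle3 : NN Φ U ℓ ⊔ discriminant Φ x ≤ Sb Φ U ℓ :=
          sup_le (S.N_le_Sb ℓ) (S.D_le_Sb ℓ)
        beta_reduce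
        rw [← Subgroup.index_eq_card, ← S.card_quotSb ℓ, ← Subgroup.index_eq_card]
        exact Subgroup.index_dvd_of_le hle3
      · have hdvd : (NN Φ U ℓ ⊔ discriminant Φ x).index ∣ (NN Φ U ℓ).index :=
          Subgroup.index_dvd_of_le le_sup_left
        have hne : (NN Φ U ℓ).index ≠ 0 := by
          rw [Subgroup.index_eq_card, S.card_quotN ℓ]
          exact S.coreIndex_ne_zero ℓ
        rw [← Subgroup.index_eq_card]
        exact fun h0 => hne (Nat.eq_zero_of_zero_dvd (h0 ▸ hdvd))
  · -- Π[D(Φ,x)] = LCM k*_ℓ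
    unfold steinitzOrderDisc steinitzOrderOfSubgroup
    refine SteinitzNum.lcmSet_eq_of_dvd ?_ ?_
    · rintro n ⟨N, hNnorm, hNopen, rfl⟩
      obtain ⟨ℓ, hℓ⟩ := S.cofinal N hNopen
      refine ⟨_, ⟨ℓ, rfl⟩, ?_, ?_⟩
      · beta_reduce
        rw [S.card_disc ℓ (fun j => adaptedStabilizer_mono Φ (hproper j).subset (hadapt j) (hadapt (j + 1))), ← Subgroup.index_eq_card, ← Subgroup.index_eq_card]
        exact Subgroup.index_dvd_of_le (Subgroup.comap_mono hℓ)
      · beta_reduce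
        rw [S.card_disc ℓ (fun j => adaptedStabilizer_mono Φ (hproper j).subset (hadapt j) (hadapt (j + 1)))]
        exact S.disc_quot_ne_zero ℓ
    · rintro m ⟨ℓ, rfl⟩
      refine ⟨Nat.card (↥(discriminant Φ x) ⧸
          ((NN Φ U ℓ).subgroupOf (discriminant Φ x))),
        ⟨NN Φ U ℓ, S.N_normal ℓ, S.N_isOpen ℓ, rfl⟩, ?_, S.disc_quot_ne_zero ℓ⟩
      beta_reduce
      rw [S.card_disc ℓ (fun j => adaptedStabilizer_mono Φ (hproper j).subset (hadapt j) (hadapt (j + 1)))]
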